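/- arXiv:1607.00257 — 6 statements merged into one kernel-verified Lean document; each statement's English description precedes it below -/
import Mathlib

section
/- Let Γ be a connected graph with diameter two. A subset S of V(Γ) is a strong resolving set of Γ if and only if (i) V(Γ)\S is a clique in Γ, and (ii) for any two distinct vertices u, v in V(Γ)\S, the closed neighborhoods N[u] and N[v] are distinct. -/
/-- Closed neighborhood of a vertex. -/
def SimpleGraph.closedNbhd {V : Type*} (Γ : SimpleGraph V) (x : V) : Set V :=
  insert x (Γ.neighborSet x)

/-- `z` strongly resolves `x` and `y`: some shortest path from `z` to `x` contains `y`,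
or some shortest path from `z` to `y` contains `x`. -/
def SimpleGraph.StronglyResolves {V : Type*} (Γ : SimpleGraph V) (z x y : V) : Prop :=
  Γ.dist z y + Γ.dist y x = Γ.dist z x ∨ Γ.dist z x + Γ.dist x y = Γ.dist z y

def SimpleGraph.IsStrongResolvingSet {V : Type*} (Γ : SimpleGraph V) (S : Set V) : Prop :=
  ∀ x y : V, x ≠ y → ∃ z ∈ S, Γ.StronglyResolves z x y

/-- Strong metric dimension. -/
noncomputable def SimpleGraph.sdim {V : Type*} (Γ : SimpleGraph V) : ℕ :=
  sInf {k | ∃ S : Set V, Γ.IsStrongResolvingSet S ∧ S.ncard = k}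

/-- Equivalence: equal closed neighborhoods. -/
def SimpleGraph.nbhdSetoid {V : Type*} (Γ : SimpleGraph V) : Setoid V :=
  ⟨fun x y => Γ.closedNbhd x = Γ.closedNbhd y,
   ⟨fun _ => rfl, Eq.symm, Eq.trans⟩⟩

/-- The reduced graph of `Γ`. -/
def SimpleGraph.reduced {V : Type*} (Γ : SimpleGraph V) :
    SimpleGraph (Quotient Γ.nbhdSetoid) where
  Adj a b := a ≠ b ∧ ∃ x y : V,
    Quotient.mk Γ.nbhdSetoid x = a ∧ Quotient.mk Γ.nbhdSetoid y = b ∧ Γ.Adj x y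
  symm := by
    constructor
    rintro a b ⟨h, x, y, hx, hy, hxy⟩
    exact ⟨h.symm, y, x, hy, hx, hxy.symm⟩
  loopless := by constructor; rintro a ⟨h, -⟩; exact h rfl

/-- The power graph of a group. -/
def powerGraph (G : Type*) [Group G] : SimpleGraph G where
  Adj x y := x ≠ y ∧ (x ∈ Subgroup.zpowers y ∨ y ∈ Subgroup.zpowers x)
  symm := by constructor; rintro x y ⟨h, h2⟩; exact ⟨h.symm, h2.symm⟩
  loopless := by constructor; rintro x ⟨h, -⟩; exact h rfl

/-- `σ n`: 1 if `n` is a prime power, otherwise the sum of the exponents in the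
prime factorization of `n`. -/
noncomputable def sigmaExp (n : ℕ) : ℕ :=
  if IsPrimePow n then 1 else n.factorization.sum fun _ k => k

/-- A maximal cyclic subgroup. -/
def IsMaxCyclic {G : Type*} [Group G] (M : Subgroup G) : Prop :=
  IsCyclic M ∧ ∀ N : Subgroup G, IsCyclic N → M ≤ N → M = N

/-- The set `𝓜_p` of maximal cyclic subgroups that are `p`-groups. -/
def maxCycP (p : ℕ) (G : Type*) [Group G] : Set (Subgroup G) :=
  {M | IsMaxCyclic M ∧ IsPGroup p M}

/-- The set of intersections of `M` with members of `𝓜_p`. -/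
def inters (p : ℕ) {G : Type*} [Group G] (M : Subgroup G) : Set (Subgroup G) :=
  {C | ∃ N ∈ maxCycP p G, C = M ⊓ N}

/-- `s_i`: the number of distinct intersections. -/
noncomputable def sNum (p : ℕ) {G : Type*} [Group G] (M : Subgroup G) : ℕ :=
  Nat.card (inters p M)

open Classical in
/-- `λ_i`, defined by `p ^ λ_i = max {|M ⊓ N| : N maximal cyclic, not a p-group}`
if maximal cyclic non-`p`-subgroups exist, and `λ_i = -1` otherwise. -/
noncomputable def lamInt (p : ℕ) {G : Type*} [Group G] (M : Subgroup G) : ℤ :=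
  if {N : Subgroup G | IsMaxCyclic N ∧ ¬ IsPGroup p N}.Nonempty then
    (padicValNat p (sSup {k | ∃ N : Subgroup G, IsMaxCyclic N ∧ ¬ IsPGroup p N ∧
        k = Nat.card ↥(M ⊓ N)}) : ℤ)
  else -1

/-- `s_i'`: the least index `u` with `p ^ λ_i < |C_{iu}|` in the chain of intersections;
equivalently one more than the number of intersections of cardinality at most `p ^ λ_i`. -/
noncomputable def sPrimeNum (p : ℕ) {G : Type*} [Group G] (M : Subgroup G) : ℕ :=
  Nat.card {C | C ∈ inters p M ∧ (Nat.card ↥C : ℚ) ≤ (p : ℚ) ^ (lamInt p M)} + 1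

noncomputable def alphaTerm (p : ℕ) {G : Type*} [Group G] (M : Subgroup G) : ℤ :=
  (sNum p M : ℤ) - (sPrimeNum p M : ℤ) + lamInt p M + 2

/-- `α_p = max_i (s_i - s_i' + λ_i + 2)`, with `α_p = 0` when `𝓜_p = ∅`. -/
noncomputable def alphaP (p : ℕ) (G : Type*) [Group G] : ℤ :=
  sSup (alphaTerm p '' maxCycP p G)

/-- A CP-group: every nonidentity element has prime power order. -/
def IsCPGroup (G : Type*) [Group G] : Prop :=
  ∀ g : G, g ≠ 1 → IsPrimePow (orderOf g)


lemma auxNbhd {V : Type*} (Γ : SimpleGraph V) {z a b : V}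
    (h1 : Γ.dist z a = 1) (h2 : Γ.dist z b = 2)
    (heq : Γ.closedNbhd a = Γ.closedNbhd b) : False := by
  have hz : z ∈ Γ.closedNbhd a :=
    Set.mem_insert_of_mem _ ((SimpleGraph.dist_eq_one_iff_adj.mp h1).symm)
  rw [heq] at hz
  rcases hz with hz | hz
  · rw [hz, Γ.dist_self] at h2; omega
  · have : Γ.dist z b = 1 := SimpleGraph.dist_eq_one_iff_adj.mpr (hz : Γ.Adj b z).symm
    omega

theorem stmt_0 {V : Type*} [Fintype V] (Γ : SimpleGraph V)
    (hconn : Γ.Connected) (hdiam : Γ.diam = 2) (S : Set V) :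
    Γ.IsStrongResolvingSet S ↔
      (Γ.IsClique Sᶜ ∧
        Sᶜ.Pairwise fun u v => Γ.closedNbhd u ≠ Γ.closedNbhd v) := by
  have hnt : Γ.ediam ≠ ⊤ := Γ.ediam_ne_top_of_diam_ne_zero (by omega)
  have hle : ∀ u v : V, Γ.dist u v ≤ 2 := fun u v => hdiam ▸ Γ.dist_le_diam hnt
  constructor
  · intro h
    have key : ∀ u ∈ Sᶜ, ∀ v ∈ Sᶜ, u ≠ v →
        ∃ z ∈ S, (Γ.dist z v = 1 ∧ Γ.dist v u = 1 ∧ Γ.dist z u = 2) ∨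
          (Γ.dist z u = 1 ∧ Γ.dist u v = 1 ∧ Γ.dist z v = 2) := by
      intro u hu v hv huv
      obtain ⟨z, hzS, hres⟩ := h u v huv
      have hzu : z ≠ u := fun e => hu (e ▸ hzS)
      have hzv : z ≠ v := fun e => hv (e ▸ hzS)
      have p1 : 0 < Γ.dist z u := hconn.pos_dist_of_ne hzu
      have p2 : 0 < Γ.dist z v := hconn.pos_dist_of_ne hzv
      have p3 : 0 < Γ.dist u v := hconn.pos_dist_of_ne huv
      have p4 : Γ.dist u v = Γ.dist v u := Γ.dist_comm
      have q1 := hle z u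
      have q2 := hle z v
      refine ⟨z, hzS, ?_⟩
      rcases hres with hr | hr
      · exact Or.inl ⟨by omega, by omega, by omega⟩
      · exact Or.inr ⟨by omega, by omega, by omega⟩
    constructor
    · intro u hu v hv huv
      obtain ⟨z, -, hc⟩ := key u hu v hv huv
      rcases hc with ⟨-, hvu, -⟩ | ⟨-, huv', -⟩
      · exact (SimpleGraph.dist_eq_one_iff_adj.mp hvu).symm
      · exact SimpleGraph.dist_eq_one_iff_adj.mp huv'
    · intro u hu v hv huv heq
      obtain ⟨z, -, hc⟩ := key u hu v hv huv
      rcases hc with ⟨hzv, -, hzu⟩ | ⟨hzu, -, hzv⟩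
      · exact auxNbhd Γ hzv hzu heq.symm
      · exact auxNbhd Γ hzu hzv heq
  · rintro ⟨hcl, hnb⟩ x y hxy
    by_cases hx : x ∈ S
    · exact ⟨x, hx, Or.inr (by rw [Γ.dist_self, zero_add])⟩
    by_cases hy : y ∈ S
    · exact ⟨y, hy, Or.inl (by rw [Γ.dist_self, zero_add])⟩
    have hadj : Γ.Adj x y := hcl hx hy hxy
    have key : ∀ u v : V, Γ.Adj u v → v ∉ S →
        ∀ w, w ∈ Γ.closedNbhd u → w ∉ Γ.closedNbhd v →
        w ∈ S ∧ Γ.dist w u + Γ.dist u v = Γ.dist w v := by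
      intro u v huv hv w hwu hwv
      have hwv' : w ≠ v := fun e => hwv (e ▸ Set.mem_insert _ _)
      have huNv : u ∈ Γ.closedNbhd v :=
        Set.mem_insert_of_mem _ (huv.symm : Γ.Adj v u)
      have hwu' : w ≠ u := fun e => hwv (e ▸ huNv)
      have hadjwu : Γ.Adj u w := by
        rcases hwu with hh | hh
        · exact absurd hh hwu'
        · exact hh
      have hnadj : ¬ Γ.Adj v w := fun hh => hwv (Set.mem_insert_of_mem _ hh)
      have hwS : w ∈ S := by
        by_contra hwS
        exact hnadj ((hcl hwS hv hwv').symm)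
      have d1 : Γ.dist w u = 1 := SimpleGraph.dist_eq_one_iff_adj.mpr hadjwu.symm
      have d2 : Γ.dist u v = 1 := SimpleGraph.dist_eq_one_iff_adj.mpr huv
      have d3 : Γ.dist w v = 2 := by
        have h1 : 0 < Γ.dist w v := hconn.pos_dist_of_ne hwv'
        have h2 : Γ.dist w v ≠ 1 := fun hh =>
          hnadj (SimpleGraph.dist_eq_one_iff_adj.mp hh).symm
        have := hle w v
        omega
      refine ⟨hwS, ?_⟩
      rw [d1, d2, d3]
    have hne : Γ.closedNbhd x ≠ Γ.closedNbhd y := hnb hx hy hxy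
    by_cases hsub : Γ.closedNbhd x ⊆ Γ.closedNbhd y
    · have h2 : ¬ Γ.closedNbhd y ⊆ Γ.closedNbhd x :=
        fun h2 => hne (Set.Subset.antisymm hsub h2)
      obtain ⟨w, hwy, hwx⟩ := Set.not_subset.mp h2
      obtain ⟨hwS, hd⟩ := key y x hadj.symm hx w hwy hwx
      exact ⟨w, hwS, Or.inl hd⟩
    · obtain ⟨w, hwx, hwy⟩ := Set.not_subset.mp hsub
      obtain ⟨hwS, hd⟩ := key x y hadj hy w hwx hwy
      exact ⟨w, hwS, Or.inr hd⟩
end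

section
/- Let Γ be a connected graph with diameter two. Then sdim(Γ) = |V(Γ)| − ω(R_Γ), where R_Γ is the reduced graph of Γ and ω denotes clique number. -/
section AuxSRS

namespace SimpleGraph

variable {V : Type*} {Γ : SimpleGraph V}

lemma mem_closedNbhd' {x y : V} : y ∈ Γ.closedNbhd x ↔ y = x ∨ Γ.Adj x y := by
  simp [SimpleGraph.closedNbhd]

lemma adj_of_closedNbhd_eq' {x y : V} (hne : x ≠ y)
    (h : Γ.closedNbhd x = Γ.closedNbhd y) : Γ.Adj x y := by
  have hx : x ∈ Γ.closedNbhd y := h ▸ mem_closedNbhd'.2 (Or.inl rfl)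
  rcases mem_closedNbhd'.1 hx with h' | h'
  · exact absurd h' hne
  · exact h'.symm

lemma adj_transfer {x x' y : V} (h : Γ.closedNbhd x = Γ.closedNbhd x')
    (hne : x' ≠ y) (hadj : Γ.Adj x y) : Γ.Adj x' y := by
  have hy : y ∈ Γ.closedNbhd x' := h ▸ mem_closedNbhd'.2 (Or.inr hadj)
  rcases mem_closedNbhd'.1 hy with h' | h'
  · exact absurd h'.symm hne
  · exact h'

lemma adj_of_reduced_adj {x y : V}
    (h : Γ.reduced.Adj (Quotient.mk Γ.nbhdSetoid x) (Quotient.mk Γ.nbhdSetoid y)) :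
    Γ.Adj x y := by
  obtain ⟨hne, a, b, ha, hb, hab⟩ := h
  have hax : Γ.closedNbhd a = Γ.closedNbhd x := by
    have := Quotient.eq.mp (ha.trans rfl)
    exact this
  have hby : Γ.closedNbhd b = Γ.closedNbhd y := Quotient.eq.mp hb
  have hxy : Γ.closedNbhd x ≠ Γ.closedNbhd y := fun hEq => hne (Quotient.sound hEq)
  have hxb : x ≠ b := by
    intro hEq
    exact hxy (hEq ▸ hby)
  have h1 : Γ.Adj x b := adj_transfer hax hxb hab
  have hyx : y ≠ x := fun hEq => hxy (by rw [hEq])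
  exact (adj_transfer hby hyx h1.symm).symm

lemma reduced_adj_of_adj {x y : V} (hne : Γ.closedNbhd x ≠ Γ.closedNbhd y)
    (hadj : Γ.Adj x y) :
    Γ.reduced.Adj (Quotient.mk Γ.nbhdSetoid x) (Quotient.mk Γ.nbhdSetoid y) :=
  ⟨fun h => hne (Quotient.eq.mp h), x, y, rfl, rfl, hadj⟩

/-- `Good W`: `W` is a clique with pairwise distinct closed neighborhoods. -/
def Good (Γ : SimpleGraph V) (W : Set V) : Prop :=
  Γ.IsClique W ∧ W.Pairwise fun a b => Γ.closedNbhd a ≠ Γ.closedNbhd b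

section DiamTwo

variable (hconn : Γ.Connected) (hdiam : Γ.diam = 2)
include hconn hdiam

lemma dist_le_two' (u v : V) : Γ.dist u v ≤ 2 := by
  have hne : Γ.ediam ≠ ⊤ := by
    intro ht
    rw [Γ.diam_eq_zero_of_ediam_eq_top ht] at hdiam
    exact absurd hdiam (by norm_num)
  calc Γ.dist u v ≤ Γ.diam := Γ.dist_le_diam hne
    _ = 2 := hdiam

lemma dist_eq_two' {u v : V} (hne : u ≠ v) (hadj : ¬ Γ.Adj u v) : Γ.dist u v = 2 := by
  have h2 := dist_le_two' hconn hdiam u v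
  have h0 : Γ.dist u v ≠ 0 := (hconn.pos_dist_of_ne hne).ne'
  have h1 : Γ.dist u v ≠ 1 := fun h => hadj ((dist_eq_one_iff_adj (G := Γ)).mp h)
  omega

lemma resolve_aux {S : Set V} (hcl : Γ.IsClique Sᶜ) {x y z : V}
    (hx : x ∈ Sᶜ) (hadj : Γ.Adj x y)
    (hz1 : z ∈ Γ.closedNbhd y) (hz2 : z ∉ Γ.closedNbhd x) :
    z ∈ S ∧ Γ.dist z y + Γ.dist y x = Γ.dist z x := by
  have hzx : z ≠ x := fun h => hz2 (h ▸ mem_closedNbhd'.2 (Or.inl rfl))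
  have hzy : z ≠ y := fun h => hz2 (h ▸ mem_closedNbhd'.2 (Or.inr hadj))
  have hzyadj : Γ.Adj z y := by
    rcases mem_closedNbhd'.1 hz1 with h' | h'
    · exact absurd h' hzy
    · exact h'.symm
  have hnadj : ¬ Γ.Adj z x := by
    intro h
    exact hz2 (mem_closedNbhd'.2 (Or.inr h.symm))
  have hzS : z ∈ S := by
    by_contra hzS
    exact hnadj (hcl hzS hx hzx)
  refine ⟨hzS, ?_⟩
  rw [(dist_eq_one_iff_adj (G := Γ)).mpr hzyadj, (dist_eq_one_iff_adj (G := Γ)).mpr hadj.symm,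
    dist_eq_two' hconn hdiam hzx hnadj]

lemma srs_iff_good (S : Set V) : Γ.IsStrongResolvingSet S ↔ Good Γ Sᶜ := by
  constructor
  · intro h
    constructor
    · intro x hx y hy hne
      by_contra hadj
      have hd : Γ.dist x y = 2 := dist_eq_two' hconn hdiam hne hadj
      obtain ⟨z, hzS, hz⟩ := h x y hne
      have hle1 := dist_le_two' hconn hdiam z x
      have hle2 := dist_le_two' hconn hdiam z y
      have hd2 : Γ.dist y x = 2 := by rw [Γ.dist_comm (u := y) (v := x)]; exact hd
      rcases hz with h' | h'
      · have : Γ.dist z y = 0 := by omega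
        exact hy (hconn.dist_eq_zero_iff.mp this ▸ hzS)
      · have : Γ.dist z x = 0 := by omega
        exact hx (hconn.dist_eq_zero_iff.mp this ▸ hzS)
    · intro x hx y hy hne heq
      have hadj : Γ.Adj x y := adj_of_closedNbhd_eq' hne heq
      obtain ⟨z, hzS, hz⟩ := h x y hne
      have hzx : z ≠ x := fun h' => hx (h' ▸ hzS)
      have hzy : z ≠ y := fun h' => hy (h' ▸ hzS)
      have hle1 := dist_le_two' hconn hdiam z x
      have hle2 := dist_le_two' hconn hdiam z y
      have h0x : Γ.dist z x ≠ 0 := (hconn.pos_dist_of_ne hzx).ne'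
      have h0y : Γ.dist z y ≠ 0 := (hconn.pos_dist_of_ne hzy).ne'
      rcases hz with h' | h'
      · rw [(dist_eq_one_iff_adj (G := Γ)).mpr hadj.symm] at h'
        have hzy1 : Γ.dist z y = 1 := by omega
        have hzyadj : Γ.Adj z y := (dist_eq_one_iff_adj (G := Γ)).mp hzy1
        have : z ∈ Γ.closedNbhd x := heq ▸ mem_closedNbhd'.2 (Or.inr hzyadj.symm)
        rcases mem_closedNbhd'.1 this with h'' | h''
        · exact hzx h''
        · have := (dist_eq_one_iff_adj (G := Γ)).mpr h''.symm
          omega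
      · rw [(dist_eq_one_iff_adj (G := Γ)).mpr hadj] at h'
        have hzx1 : Γ.dist z x = 1 := by omega
        have hzxadj : Γ.Adj z x := (dist_eq_one_iff_adj (G := Γ)).mp hzx1
        have : z ∈ Γ.closedNbhd y := heq ▸ mem_closedNbhd'.2 (Or.inr hzxadj.symm)
        rcases mem_closedNbhd'.1 this with h'' | h''
        · exact hzy h''
        · have := (dist_eq_one_iff_adj (G := Γ)).mpr h''.symm
          omega
  · rintro ⟨hcl, hpw⟩ x y hne
    by_cases hx : x ∈ S
    · exact ⟨x, hx, Or.inr (by rw [Γ.dist_self, Nat.zero_add])⟩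
    by_cases hy : y ∈ S
    · exact ⟨y, hy, Or.inl (by rw [Γ.dist_self, Nat.zero_add])⟩
    have hxC : x ∈ Sᶜ := hx
    have hyC : y ∈ Sᶜ := hy
    have hadj : Γ.Adj x y := hcl hxC hyC hne
    have hNe : Γ.closedNbhd x ≠ Γ.closedNbhd y := hpw hxC hyC hne
    by_cases hsub : Γ.closedNbhd x ⊆ Γ.closedNbhd y
    · have : ¬ Γ.closedNbhd y ⊆ Γ.closedNbhd x := fun h =>
        hNe (Set.Subset.antisymm hsub h)
      obtain ⟨z, hz1, hz2⟩ := Set.not_subset.mp this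
      obtain ⟨hzS, hd⟩ := resolve_aux hconn hdiam hcl hxC hadj hz1 hz2
      exact ⟨z, hzS, Or.inl hd⟩
    · obtain ⟨z, hz1, hz2⟩ := Set.not_subset.mp hsub
      obtain ⟨hzS, hd⟩ := resolve_aux hconn hdiam hcl hyC hadj.symm hz1 hz2
      exact ⟨z, hzS, Or.inr hd⟩

end DiamTwo

section Counting

variable [Fintype V]

lemma good_ncard_le_cliqueNum (W : Set V) (hW : Good Γ W) :
    W.ncard ≤ Γ.reduced.cliqueNum := by
  classical
  letI : Fintype (Quotient Γ.nbhdSetoid) :=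
    Fintype.ofSurjective (Quotient.mk Γ.nbhdSetoid) fun q => Quotient.exists_rep q
  set T : Finset (Quotient Γ.nbhdSetoid) := W.toFinset.image (Quotient.mk Γ.nbhdSetoid) with hT
  have hinj : Set.InjOn (Quotient.mk Γ.nbhdSetoid) W.toFinset := by
    intro a ha b hb hab
    by_contra hne
    exact hW.2 (Set.mem_toFinset.mp ha) (Set.mem_toFinset.mp hb) hne (Quotient.eq.mp hab)
  have hcard : T.card = W.ncard := by
    rw [hT, Finset.card_image_of_injOn hinj, Set.ncard_eq_toFinset_card']
  have hcl : Γ.reduced.IsClique (T : Set (Quotient Γ.nbhdSetoid)) := by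
    intro a ha b hb hne
    simp only [hT, Finset.coe_image, Set.mem_image, Finset.mem_coe, Set.mem_toFinset] at ha hb
    obtain ⟨u, hu, rfl⟩ := ha
    obtain ⟨v, hv, rfl⟩ := hb
    have huv : u ≠ v := fun h => hne (by rw [h])
    exact reduced_adj_of_adj (hW.2 hu hv huv) (hW.1 hu hv huv)
  calc W.ncard = T.card := hcard.symm
    _ ≤ Γ.reduced.cliqueNum := IsClique.card_le_cliqueNum (tc := hcl)

lemma exists_good_ncard_cliqueNum :
    ∃ W : Set V, Good Γ W ∧ W.ncard = Γ.reduced.cliqueNum := by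
  classical
  letI : Fintype (Quotient Γ.nbhdSetoid) :=
    Fintype.ofSurjective (Quotient.mk Γ.nbhdSetoid) fun q => Quotient.exists_rep q
  obtain ⟨s, hs⟩ := Γ.reduced.exists_isNClique_cliqueNum
  refine ⟨Quotient.out '' (s : Set (Quotient Γ.nbhdSetoid)), ⟨?_, ?_⟩, ?_⟩
  · rintro _ ⟨a, ha, rfl⟩ _ ⟨b, hb, rfl⟩ hne
    have hab : a ≠ b := fun h => hne (by rw [h])
    have hadj := hs.1 ha hb hab
    have h2 : Γ.reduced.Adj (Quotient.mk Γ.nbhdSetoid a.out) (Quotient.mk Γ.nbhdSetoid b.out) := by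
      rwa [Quotient.out_eq, Quotient.out_eq]
    exact adj_of_reduced_adj h2
  · rintro _ ⟨a, ha, rfl⟩ _ ⟨b, hb, rfl⟩ hne heq
    have hab : a = b := by
      rw [← Quotient.out_eq a, ← Quotient.out_eq b]
      exact Quotient.sound heq
    exact hne (by rw [hab])
  · rw [Set.ncard_image_of_injective _ Quotient.out_injective, Set.ncard_coe_finset, hs.2]

end Counting


end SimpleGraph

end AuxSRS

theorem stmt_1 {V : Type*} [Fintype V] (Γ : SimpleGraph V)
    (hconn : Γ.Connected) (hdiam : Γ.diam = 2) :
    (Γ.sdim : ℤ) = (Fintype.card V : ℤ) - (Γ.reduced.cliqueNum : ℤ) := by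
  classical
  obtain ⟨W, hWgood, hWcard⟩ := SimpleGraph.exists_good_ncard_cliqueNum (Γ := Γ)
  have hωle : Γ.reduced.cliqueNum ≤ Fintype.card V := by
    rw [← hWcard]
    have h := Set.ncard_le_ncard (Set.subset_univ W) Set.finite_univ
    rwa [Set.ncard_univ, Nat.card_eq_fintype_card] at h
  have hcompl : ∀ S : Set V, S.ncard + Sᶜ.ncard = Fintype.card V := fun S => by
    rw [← Nat.card_eq_fintype_card]; exact Set.ncard_add_ncard_compl S
  have hmem : (Fintype.card V - Γ.reduced.cliqueNum) ∈
      {k | ∃ S : Set V, Γ.IsStrongResolvingSet S ∧ S.ncard = k} := by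
    refine ⟨Wᶜ, ?_, ?_⟩
    · rw [SimpleGraph.srs_iff_good hconn hdiam, compl_compl]; exact hWgood
    · have h := hcompl Wᶜ
      rw [compl_compl] at h
      omega
  have hsdim : Γ.sdim = Fintype.card V - Γ.reduced.cliqueNum := by
    apply le_antisymm
    · exact Nat.sInf_le hmem
    · refine le_csInf ⟨_, hmem⟩ ?_
      rintro k ⟨S, hS, rfl⟩
      have hgood := (SimpleGraph.srs_iff_good hconn hdiam S).mp hS
      have h1 := SimpleGraph.good_ncard_le_cliqueNum Sᶜ hgood
      have h2 := hcompl S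
      omega
  rw [hsdim, Nat.cast_sub hωle]
end

section
/- Let n = p₁^{r₁}···p_m^{r_m} with m ≥ 2 distinct primes. Then the power graph of Z_n contains a set T of r₁+···+r_m elements that is a clique in which any two distinct elements have distinct closed neighborhoods. Explicitly, one can take elements of orders p_m, p_m², ..., p_m^{r_m}, p_{m−1}p_m^{r_m}, ..., p_{m−1}^{r_{m−1}}p_m^{r_m}, ..., p₁^{r₁}···p_m^{r_m}. -/
private def sd4D {m : ℕ} (p r : Fin m → ℕ) (i : Fin m) (e : ℕ) : ℕ :=
  p i ^ (e + 1) * ∏ j ∈ Finset.univ.filter (fun j => i < j), p j ^ r j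

section
variable {m : ℕ} {p r : Fin m → ℕ}

private lemma sd4D_dvd (hp : ∀ i, (p i).Prime) {i : Fin m} {e : ℕ} (he : e + 1 ≤ r i) :
    sd4D p r i e ∣ ∏ j, p j ^ r j := by
  calc sd4D p r i e ∣ p i ^ r i * ∏ j ∈ Finset.univ.filter (fun j => i < j), p j ^ r j :=
        mul_dvd_mul (pow_dvd_pow _ he) dvd_rfl
  _ = ∏ j ∈ insert i (Finset.univ.filter (fun j => i < j)), p j ^ r j := by
        rw [Finset.prod_insert (by simp only [Finset.mem_filter, Finset.mem_univ, true_and]; exact lt_irrefl i)]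
  _ ∣ ∏ j, p j ^ r j := Finset.prod_dvd_prod_of_subset _ _ _ (Finset.subset_univ _)

private lemma sd4D_chain {i i' : Fin m} {e e' : ℕ} (he : e + 1 ≤ r i) (h : i' < i) :
    sd4D p r i e ∣ sd4D p r i' e' := by
  calc sd4D p r i e ∣ ∏ j ∈ insert i (Finset.univ.filter (fun j => i < j)), p j ^ r j := by
        rw [Finset.prod_insert (by simp only [Finset.mem_filter, Finset.mem_univ, true_and]; exact lt_irrefl i)]
        exact mul_dvd_mul (pow_dvd_pow _ he) dvd_rfl
  _ ∣ ∏ j ∈ Finset.univ.filter (fun j => i' < j), p j ^ r j := by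
        refine Finset.prod_dvd_prod_of_subset _ _ _ ?_
        intro j hj
        simp only [Finset.mem_insert, Finset.mem_filter, Finset.mem_univ, true_and] at hj ⊢
        rcases hj with rfl | hj
        · exact h
        · exact h.trans hj
  _ ∣ sd4D p r i' e' := dvd_mul_left _ _

private lemma sd4D_prime_dvd (hp : ∀ i, (p i).Prime) (hinj : Function.Injective p)
    {i i' : Fin m} {e : ℕ} (h : p i' ∣ sd4D p r i e) : i' = i ∨ i < i' := by
  rcases ((hp i').prime.dvd_mul).mp h with h' | h'
  · exact Or.inl (hinj ((Nat.prime_dvd_prime_iff_eq (hp i') (hp i)).mp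
      ((hp i').dvd_of_dvd_pow h')))
  · obtain ⟨j, hj, hd⟩ := ((hp i').prime.dvd_finset_prod_iff _).mp h'
    simp only [Finset.mem_filter, Finset.mem_univ, true_and] at hj
    have hij : i' = j := hinj ((Nat.prime_dvd_prime_iff_eq (hp i') (hp j)).mp
      ((hp i').dvd_of_dvd_pow hd))
    exact Or.inr (hij ▸ hj)

private lemma sd4D_self_dvd (hp : ∀ i, (p i).Prime) (i : Fin m) (e : ℕ) :
    p i ∣ sd4D p r i e :=
  (dvd_pow_self (p i) (Nat.succ_ne_zero e)).mul_right _

private lemma sd4D_inj (hp : ∀ i, (p i).Prime) (hinj : Function.Injective p)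
    {i i' : Fin m} {e e' : ℕ} (h : sd4D p r i e = sd4D p r i' e') : i = i' ∧ e = e' := by
  have haux : ∀ a b : Fin m, ∀ u v : ℕ, a < b → sd4D p r a u ≠ sd4D p r b v := by
    intro a b u v hab hEq
    have hpa : p a ∣ sd4D p r b v := hEq ▸ sd4D_self_dvd hp a u
    rcases sd4D_prime_dvd hp hinj hpa with h1 | h1
    · exact absurd (h1 ▸ hab) (lt_irrefl _)
    · exact absurd (hab.trans h1) (lt_irrefl _)
  rcases lt_trichotomy i i' with hlt | rfl | hlt
  · exact absurd h (haux i i' e e' hlt)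
  · refine ⟨rfl, ?_⟩
    have hQ : 0 < ∏ j ∈ Finset.univ.filter (fun j => i < j), p j ^ r j :=
      Finset.prod_pos fun j _ => pow_pos (hp j).pos _
    have := Nat.eq_of_mul_eq_mul_right hQ h
    have := Nat.pow_right_injective (hp i).two_le this
    omega
  · exact absurd h.symm (haux i' i e' e hlt)

end

private def sd4Elem (n d : ℕ) : Multiplicative (ZMod n) :=
  Multiplicative.ofAdd ((n / d : ℕ) : ZMod n)

private lemma sd4_orderOf {n d : ℕ} (hn : n ≠ 0) (hd : d ∣ n) :
    orderOf (sd4Elem n d) = d := by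
  unfold sd4Elem
  rw [orderOf_ofAdd_eq_addOrderOf, ZMod.addOrderOf_coe _ hn,
    Nat.gcd_eq_right (Nat.div_dvd_of_dvd hd), Nat.div_div_self hd hn]

private lemma sd4_mem {n u v : ℕ} (hn : n ≠ 0) (huv : u ∣ v) (hv : v ∣ n) :
    sd4Elem n u ∈ Subgroup.zpowers (sd4Elem n v) := by
  have hv0 : 0 < v := Nat.pos_of_ne_zero (fun h => hn (by simpa [h] using hv))
  have hk : (v / u) * (n / v) = n / u := by
    rw [Nat.div_mul_div_comm huv hv, mul_comm v n, Nat.mul_div_mul_right _ _ hv0]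
  have hpow : (sd4Elem n v) ^ (v / u) = sd4Elem n u := by
    unfold sd4Elem
    rw [← ofAdd_nsmul]
    congr 1
    rw [nsmul_eq_mul, ← Nat.cast_mul, hk]
  exact hpow ▸ Subgroup.pow_mem _ (Subgroup.mem_zpowers _) _

private lemma sd4_dvd_of_mem {G : Type*} [Group G] {z y : G}
    (h : z ∈ Subgroup.zpowers y) : orderOf z ∣ orderOf y := by
  have := Subgroup.orderOf_dvd_natCard (Subgroup.zpowers y) h
  rwa [Nat.card_zpowers] at this

private lemma sd4_key {n c dd dd' : ℕ} (hn : n ≠ 0) (hc : c ∣ n) (hdd : dd ∣ n)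
    (hdd' : dd' ∣ n) (h1 : c ∣ dd' ∨ dd' ∣ c) (h2 : ¬ c ∣ dd) (h3 : ¬ dd ∣ c) :
    (powerGraph (Multiplicative (ZMod n))).closedNbhd (sd4Elem n dd) ≠
      (powerGraph (Multiplicative (ZMod n))).closedNbhd (sd4Elem n dd') := by
  intro heq
  have hoz : orderOf (sd4Elem n c) = c := sd4_orderOf hn hc
  have hox : orderOf (sd4Elem n dd) = dd := sd4_orderOf hn hdd
  have hoy : orderOf (sd4Elem n dd') = dd' := sd4_orderOf hn hdd'
  have hzy : sd4Elem n c ∈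
      (powerGraph (Multiplicative (ZMod n))).closedNbhd (sd4Elem n dd') := by
    by_cases hz : sd4Elem n c = sd4Elem n dd'
    · exact hz ▸ Set.mem_insert _ _
    · refine Set.mem_insert_of_mem _ ?_
      rw [SimpleGraph.mem_neighborSet]
      refine ⟨fun h => hz h.symm, ?_⟩
      rcases h1 with h1 | h1
      · exact Or.inr (sd4_mem hn h1 hdd')
      · exact Or.inl (sd4_mem hn h1 hc)
  rw [← heq] at hzy
  rcases Set.mem_insert_iff.mp hzy with hz | hz
  · exact h2 (by rw [← hoz, hz, hox])
  · rw [SimpleGraph.mem_neighborSet] at hz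
    rcases hz.2 with h | h
    · exact h3 (by rw [← hox, ← hoz]; exact sd4_dvd_of_mem h)
    · exact h2 (by rw [← hoz, ← hox]; exact sd4_dvd_of_mem h)

theorem stmt_4 (m : ℕ) (hm : 2 ≤ m) (p r : Fin m → ℕ) (hp : ∀ i, (p i).Prime)
    (hinj : Function.Injective p) (hr : ∀ i, 1 ≤ r i)
    (n : ℕ) (hn : n = ∏ i, p i ^ r i) :
    ∃ a : (i : Fin m) → Fin (r i) → Multiplicative (ZMod n),
      (∀ i e, orderOf (a i e) =
        p i ^ ((e : ℕ) + 1) * ∏ j ∈ Finset.univ.filter (fun j => i < j), p j ^ r j) ∧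
      ({x | ∃ i e, a i e = x} : Set (Multiplicative (ZMod n))).ncard = ∑ i, r i ∧
      (powerGraph (Multiplicative (ZMod n))).IsClique {x | ∃ i e, a i e = x} ∧
      ({x | ∃ i e, a i e = x} : Set (Multiplicative (ZMod n))).Pairwise
        (fun x y => (powerGraph (Multiplicative (ZMod n))).closedNbhd x ≠
          (powerGraph (Multiplicative (ZMod n))).closedNbhd y) := by
  classical
  have hnpos : 0 < n := by
    rw [hn]; exact Finset.prod_pos fun i _ => pow_pos (hp i).pos _
  have hn0 : n ≠ 0 := hnpos.ne'
  have hDn : ∀ (i : Fin m) (e : ℕ), e + 1 ≤ r i → sd4D p r i e ∣ n :=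
    fun i e he => hn ▸ sd4D_dvd hp he
  -- the elements
  refine ⟨fun i e => sd4Elem n (sd4D p r i (e : ℕ)), ?_, ?_, ?_, ?_⟩
  · intro i e
    exact sd4_orderOf hn0 (hDn i e e.isLt)
  · -- cardinality
    have hfinj : Function.Injective
        (fun q : Σ i : Fin m, Fin (r i) => sd4Elem n (sd4D p r q.1 (q.2 : ℕ))) := by
      rintro ⟨i, e⟩ ⟨i', e'⟩ h
      simp only at h
      have horders := congrArg orderOf h
      rw [sd4_orderOf hn0 (hDn i e e.isLt), sd4_orderOf hn0 (hDn i' e' e'.isLt)] at horders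
      obtain ⟨hi, he⟩ := sd4D_inj hp hinj horders
      subst hi
      exact congrArg (Sigma.mk i) (Fin.ext he)
    show ({x | ∃ i, ∃ e : Fin (r i), sd4Elem n (sd4D p r i (e : ℕ)) = x} :
        Set (Multiplicative (ZMod n))).ncard = ∑ i, r i
    have hset : ({x | ∃ i, ∃ e : Fin (r i), sd4Elem n (sd4D p r i (e : ℕ)) = x} :
        Set (Multiplicative (ZMod n))) =
        Set.range (fun q : Σ i : Fin m, Fin (r i) => sd4Elem n (sd4D p r q.1 (q.2 : ℕ))) := by
      ext x
      constructor
      · rintro ⟨i, e, h⟩; exact ⟨⟨i, e⟩, h⟩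
      · rintro ⟨⟨i, e⟩, h⟩; exact ⟨i, e, h⟩
    rw [hset, ← Nat.card_coe_set_eq, Nat.card_range_of_injective hfinj,
      Nat.card_eq_fintype_card]
    simp
  · -- clique
    rintro x ⟨i, e, rfl⟩ y ⟨i', e', rfl⟩ hne
    refine ⟨hne, ?_⟩
    rcases lt_trichotomy i i' with h | rfl | h
    · exact Or.inr (sd4_mem hn0 (sd4D_chain e'.isLt h) (hDn i e e.isLt))
    · rcases le_total (e : ℕ) (e' : ℕ) with h | h
      · refine Or.inl (sd4_mem hn0 ?_ (hDn i e' e'.isLt))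
        exact mul_dvd_mul (pow_dvd_pow _ (by omega)) dvd_rfl
      · refine Or.inr (sd4_mem hn0 ?_ (hDn i e e.isLt))
        exact mul_dvd_mul (pow_dvd_pow _ (by omega)) dvd_rfl
    · exact Or.inl (sd4_mem hn0 (sd4D_chain e.isLt h) (hDn i' e' e'.isLt))
  · -- pairwise distinct closed neighborhoods
    have hpQ : ∀ i : Fin m, ¬ p i ∣ ∏ j ∈ Finset.univ.filter (fun j => i < j), p j ^ r j := by
      intro i hdvd
      obtain ⟨j, hj, hd⟩ := ((hp i).prime.dvd_finset_prod_iff _).mp hdvd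
      simp only [Finset.mem_filter, Finset.mem_univ, true_and] at hj
      have hij : i = j := hinj ((Nat.prime_dvd_prime_iff_eq (hp i) (hp j)).mp
        ((hp i).dvd_of_dvd_pow hd))
      exact absurd (hij ▸ hj) (lt_irrefl i)
    have hsub : ∀ (i : Fin m) (e e' : ℕ), e + 1 ≤ r i → e' + 1 ≤ r i → e < e' →
        (powerGraph (Multiplicative (ZMod n))).closedNbhd (sd4Elem n (sd4D p r i e)) ≠
          (powerGraph (Multiplicative (ZMod n))).closedNbhd (sd4Elem n (sd4D p r i e')) := by
      intro i e e' he he' hlt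
      by_cases hj : ∃ j : Fin m, i < j
      · obtain ⟨j₀, hj₀⟩ := hj
        refine sd4_key hn0 (c := p i ^ (e' + 1))
          ((dvd_mul_right _ _).trans (hDn i e' he')) (hDn i e he) (hDn i e' he')
          (Or.inl (dvd_mul_right _ _)) ?_ ?_
        · intro hdvd
          unfold sd4D at hdvd
          have cop : Nat.Coprime (p i ^ (e' + 1))
              (∏ j ∈ Finset.univ.filter (fun j => i < j), p j ^ r j) :=
            Nat.Coprime.pow_left _ ((hp i).coprime_iff_not_dvd.mpr (hpQ i))
          have h1 := cop.dvd_of_dvd_mul_right hdvd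
          have h2 := (pow_dvd_pow_iff (hp i).pos.ne'
            (by simp [Nat.isUnit_iff, (hp i).ne_one])).mp h1
          omega
        · intro hdvd
          have hmem : j₀ ∈ Finset.univ.filter (fun j => i < j) := by
            simp only [Finset.mem_filter, Finset.mem_univ, true_and]
            exact hj₀
          have h1 : p j₀ ∣ sd4D p r i e := by
            refine Dvd.dvd.mul_left ?_ _
            exact (dvd_pow_self (p j₀) (Nat.one_le_iff_ne_zero.mp (hr j₀))).trans
              (Finset.dvd_prod_of_mem (fun j => p j ^ r j) hmem)
          have h2 : p j₀ ∣ p i ^ (e' + 1) := h1.trans hdvd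
          have h3 : j₀ = i := hinj ((Nat.prime_dvd_prime_iff_eq (hp j₀) (hp i)).mp
            ((hp j₀).dvd_of_dvd_pow h2))
          exact absurd (h3 ▸ hj₀) (lt_irrefl i)
      · obtain ⟨i'', hi''⟩ : ∃ i'' : Fin m, i'' ≠ i := by
          haveI : Nontrivial (Fin m) := Fin.nontrivial_iff_two_le.mpr hm
          exact exists_ne i
        have hQ : ∏ j ∈ Finset.univ.filter (fun j => i < j), p j ^ r j = 1 := by
          rw [Finset.filter_false_of_mem, Finset.prod_empty]
          intro j _ hij
          exact hj ⟨j, hij⟩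
        have hDe : sd4D p r i e = p i ^ (e + 1) := by unfold sd4D; rw [hQ, mul_one]
        have hDe' : sd4D p r i e' = p i ^ (e' + 1) := by unfold sd4D; rw [hQ, mul_one]
        have hcn : p i'' * p i ^ (e + 1) ∣ n := by
          have h1 : p i'' * p i ^ (e + 1) ∣ p i'' ^ r i'' * p i ^ r i :=
            mul_dvd_mul (dvd_pow_self _ (Nat.one_le_iff_ne_zero.mp (hr i'')))
              (pow_dvd_pow _ he)
          have h2 : p i'' ^ r i'' * p i ^ r i = ∏ j ∈ ({i'', i} : Finset (Fin m)), p j ^ r j :=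
            (Finset.prod_pair (f := fun j => p j ^ r j) hi'').symm
          rw [hn]
          exact h1.trans (h2 ▸ Finset.prod_dvd_prod_of_subset _ _ _ (Finset.subset_univ _))
        refine (sd4_key hn0 (c := p i'' * p i ^ (e + 1)) hcn (hDn i e' he') (hDn i e he)
          (Or.inr (by rw [hDe]; exact dvd_mul_left _ _)) ?_ ?_).symm
        · intro hdvd
          rw [hDe'] at hdvd
          have h1 : p i'' ∣ p i ^ (e' + 1) := (dvd_mul_right _ _).trans hdvd
          exact hi'' (hinj ((Nat.prime_dvd_prime_iff_eq (hp i'') (hp i)).mp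
            ((hp i'').dvd_of_dvd_pow h1)))
        · intro hdvd
          rw [hDe'] at hdvd
          have cop : Nat.Coprime (p i ^ (e' + 1)) (p i'') :=
            Nat.Coprime.pow_left _
              ((Nat.coprime_primes (hp i) (hp i'')).mpr (fun h => hi'' (hinj h.symm)))
          have h1 := cop.dvd_of_dvd_mul_left hdvd
          have h2 := (pow_dvd_pow_iff (hp i).pos.ne'
            (by simp [Nat.isUnit_iff, (hp i).ne_one])).mp h1
          omega
    rintro x ⟨i, e, rfl⟩ y ⟨i', e', rfl⟩ hne
    rcases lt_trichotomy i i' with h | h | h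
    · refine (sd4_key hn0 (c := p i)
        (((dvd_pow_self _ (Nat.succ_ne_zero (e : ℕ))).mul_right _).trans (hDn i e e.isLt))
        (hDn i' e' e'.isLt) (hDn i e e.isLt)
        (Or.inl (sd4D_self_dvd hp i (e : ℕ))) ?_ ?_).symm
      · intro hdvd
        rcases sd4D_prime_dvd hp hinj hdvd with h1 | h1
        · exact absurd (h1 ▸ h) (lt_irrefl _)
        · exact absurd (h.trans h1) (lt_irrefl _)
      · intro hdvd
        have h1 : p i' ∣ p i := (sd4D_self_dvd hp i' (e' : ℕ)).trans hdvd
        have h2 : i' = i := hinj ((Nat.prime_dvd_prime_iff_eq (hp i') (hp i)).mp h1)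
        exact absurd (h2 ▸ h) (lt_irrefl _)
    · subst h
      rcases lt_trichotomy (e : ℕ) (e' : ℕ) with h | h | h
      · exact hsub i e e' e.isLt e'.isLt h
      · exact absurd (congrArg (fun t => sd4Elem n (sd4D p r i t)) h) hne
      · exact (hsub i e' e e'.isLt e.isLt h).symm
    · refine sd4_key hn0 (c := p i')
        (((dvd_pow_self _ (Nat.succ_ne_zero (e' : ℕ))).mul_right _).trans (hDn i' e' e'.isLt))
        (hDn i e e.isLt) (hDn i' e' e'.isLt)
        (Or.inl (sd4D_self_dvd hp i' (e' : ℕ))) ?_ ?_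
      · intro hdvd
        rcases sd4D_prime_dvd hp hinj hdvd with h1 | h1
        · exact absurd (h1 ▸ h) (lt_irrefl _)
        · exact absurd (h.trans h1) (lt_irrefl _)
      · intro hdvd
        have h1 : p i ∣ p i' := (sd4D_self_dvd hp i (e : ℕ)).trans hdvd
        have h2 : i = i' := hinj ((Nat.prime_dvd_prime_iff_eq (hp i) (hp i')).mp h1)
        exact absurd (h2 ▸ h) (lt_irrefl _)
end

section
/- Let G be a finite group, p a prime, and M₁, ..., M_t the maximal cyclic subgroups of G that are p-groups. Fix i, and let C_{i1} ⊊ C_{i2} ⊊ ··· ⊊ C_{is_i} = M_i be the distinct intersections M_i ∩ M_j for j = 1,...,t (they form a chain since M_i is cyclic of prime power order). If c_{iu} generates C_{iu} and c_{iv} generates C_{iv} with u ≠ v, then the closed neighborhoods of c_{iu} and c_{iv} in the power graph of G are distinct. -/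
lemma key_aux {G : Type*} [Group G] [Finite G] (p : ℕ)
    (M : Subgroup G) (hM : M ∈ maxCycP p G)
    (C D : Subgroup G) (hC : C ∈ inters p M) (hD : D ∈ inters p M) (hCD : C ≠ D)
    (c d : G) (hc : Subgroup.zpowers c = C) (hd : Subgroup.zpowers d = D)
    (hdC : d ∉ C) :
    (powerGraph G).closedNbhd c ≠ (powerGraph G).closedNbhd d := by
  obtain ⟨N, hN, hCN⟩ := hC
  obtain ⟨N', hN', hDN'⟩ := hD
  haveI : IsCyclic ↥N := hN.1.1
  obtain ⟨g, hg⟩ := IsCyclic.exists_generator (α := ↥N)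
  have hgN : Subgroup.zpowers (g : G) = N := by
    apply le_antisymm
    · exact (Subgroup.zpowers_le).mpr g.2
    · intro x hx
      obtain ⟨k, hk⟩ := hg ⟨x, hx⟩
      exact ⟨k, congrArg Subtype.val hk⟩
  have hDleM : D ≤ M := hDN' ▸ inf_le_left
  intro heq
  have hcC : c ∈ C := hc ▸ Subgroup.mem_zpowers c
  have hcN : c ∈ Subgroup.zpowers (g : G) := by
    rw [hgN]
    have : c ∈ M ⊓ N := hCN ▸ hcC
    exact this.2
  have hgc : (g : G) ∈ (powerGraph G).closedNbhd c := by
    by_cases h : (g : G) = c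
    · exact h ▸ Set.mem_insert _ _
    · exact Set.mem_insert_of_mem _ ⟨fun he => h he.symm, Or.inl hcN⟩
  rw [heq] at hgc
  rcases hgc with h | h
  · -- g = d, so N = D, hence C = M ⊓ D = D, contradiction
    have hND : N = D := by rw [← hgN, h, hd]
    exact hCD (by rw [hCN, hND, inf_eq_right.mpr hDleM])
  · obtain ⟨hne, hor⟩ := h
    rcases hor with h1 | h2
    · -- d ∈ zpowers g = N, and d ∈ D ≤ M, so d ∈ C
      have hdM : d ∈ M := hDleM (hd ▸ Subgroup.mem_zpowers d)
      exact hdC (hCN ▸ ⟨hdM, hgN ▸ h1⟩)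
    · -- g ∈ zpowers d, so N ≤ D, maximality gives N = D
      have hle : N ≤ D := by
        rw [← hgN]
        exact Subgroup.zpowers_le.mpr (hd ▸ h2)
      have hDcyc : IsCyclic ↥D := by
        refine ⟨⟨⟨d, hd ▸ Subgroup.mem_zpowers d⟩, ?_⟩⟩
        rintro ⟨x, hx⟩
        rw [← hd] at hx
        obtain ⟨k, hk⟩ := hx
        exact ⟨k, Subtype.ext (by simpa using hk)⟩
      have hND : N = D := hN.1.2 D hDcyc hle
      exact hCD (by rw [hCN, hND, inf_eq_right.mpr hDleM])

theorem stmt_5 {G : Type*} [Group G] [Finite G] (p : ℕ) (hp : p.Prime)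
    (M : Subgroup G) (hM : M ∈ maxCycP p G)
    (C D : Subgroup G) (hC : C ∈ inters p M) (hD : D ∈ inters p M) (hCD : C ≠ D)
    (c d : G) (hc : Subgroup.zpowers c = C) (hd : Subgroup.zpowers d = D) :
    (powerGraph G).closedNbhd c ≠ (powerGraph G).closedNbhd d := by
  have h : ¬ C ≤ D ∨ ¬ D ≤ C := by
    by_contra h
    push_neg at h
    exact hCD (le_antisymm h.1 h.2)
  rcases h with h | h
  · have hcD : c ∉ D := fun hm => h (hc ▸ Subgroup.zpowers_le.mpr hm)
    exact (key_aux p M hM D C hD hC hCD.symm d c hd hc hcD).symm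
  · have hdC : d ∉ C := fun hm => h (hd ▸ Subgroup.zpowers_le.mpr hm)
    exact key_aux p M hM C D hC hD hCD c d hc hd hdC
end

section
/- Let G be a noncyclic finite group of order n, p a prime with M_p ≠ ∅ (M_p = set of maximal cyclic subgroups of G that are p-groups), and define α_p as in context. Then the reduced graph of the power graph of G contains a clique of size α_p. -/
set_option linter.unusedSectionVars false
set_option maxHeartbeats 1000000

open Subgroup

section AuxLems
variable {G : Type*} [Group G] [Finite G]

lemma exists_zpowers_eq {H : Subgroup G} (h : IsCyclic H) : ∃ g ∈ H, Subgroup.zpowers g = H := by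
  obtain ⟨g, hg⟩ := h.exists_generator
  refine ⟨(g : G), g.2, le_antisymm (zpowers_le.mpr g.2) ?_⟩
  intro x hx
  obtain ⟨n, hn⟩ := hg ⟨x, hx⟩
  exact ⟨n, by simpa using congrArg (Subtype.val) hn⟩

lemma dvd_of_div_dvd_div {n a b : ℕ} (hn : n ≠ 0) (ha : a ∣ n) (hb : b ∣ n)
    (h : n / a ∣ n / b) : b ∣ a := by
  have ha0 : a ≠ 0 := fun h0 => hn (by simpa [h0] using ha)
  have hb0 : b ≠ 0 := fun h0 => hn (by simpa [h0] using hb)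
  rw [Nat.div_dvd_iff_dvd_mul ha (Nat.pos_of_ne_zero ha0)] at h
  nth_rewrite 1 [← Nat.mul_div_cancel' hb] at h
  exact (Nat.mul_dvd_mul_iff_right (Nat.div_pos (Nat.le_of_dvd (Nat.pos_of_ne_zero hn) hb)
    (Nat.pos_of_ne_zero hb0))).mp h

lemma mem_zpowers_of_orderOf_dvd {z x y : G} (hx : x ∈ zpowers z) (hy : y ∈ zpowers z)
    (h : orderOf x ∣ orderOf y) : x ∈ zpowers y := by
  obtain ⟨i, hi⟩ := (mem_powers_iff_mem_zpowers).mpr hx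
  obtain ⟨j, hj⟩ := (mem_powers_iff_mem_zpowers).mpr hy
  simp only at hi hj
  subst hi hj
  have hn0 : orderOf z ≠ 0 := (orderOf_pos z).ne'
  rw [orderOf_pow, orderOf_pow] at h
  have hdvd : (orderOf z).gcd j ∣ (orderOf z).gcd i :=
    dvd_of_div_dvd_div hn0 (Nat.gcd_dvd_left _ _) (Nat.gcd_dvd_left _ _) h
  have key : z ^ ((orderOf z).gcd j) ∈ zpowers (z ^ j) := by
    have hb := Nat.gcd_eq_gcd_ab (orderOf z) j
    have heq : (z : G) ^ (((orderOf z).gcd j : ℤ)) = (z ^ j) ^ (Nat.gcdB (orderOf z) j) := by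
      rw [hb, zpow_add, zpow_mul, zpow_mul]
      have h1 : (z : G) ^ ((orderOf z : ℕ) : ℤ) = 1 := by
        rw [zpow_natCast, pow_orderOf_eq_one]
      rw [h1, one_zpow, one_mul, zpow_natCast]
    exact ⟨Nat.gcdB (orderOf z) j, heq.symm.trans (zpow_natCast z _)⟩
  have h2 : z ^ ((orderOf z).gcd i) ∈ zpowers (z ^ j) := by
    obtain ⟨k, hk⟩ := hdvd
    rw [hk, pow_mul]
    exact Subgroup.pow_mem _ key k
  obtain ⟨k, hk⟩ := Nat.gcd_dvd_right (orderOf z) i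
  rw [hk, pow_mul]
  exact Subgroup.pow_mem _ h2 k

lemma nbhd_ne_of_witness {x y z : G} (h1 : x ∈ zpowers z) (h2 : z ∉ zpowers y)
    (h3 : y ∉ zpowers z) : (powerGraph G).closedNbhd x ≠ (powerGraph G).closedNbhd y := by
  intro heq
  have hzx : z ∈ (powerGraph G).closedNbhd x := by
    by_cases hzx : z = x
    · exact hzx ▸ Set.mem_insert _ _
    · exact Set.mem_insert_of_mem _ (by exact ⟨fun h => hzx h.symm, Or.inl h1⟩)
  rw [heq] at hzx
  rcases hzx with h | h
  · exact h3 (h ▸ Subgroup.mem_zpowers z)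
  · rcases h with ⟨-, h | h⟩
    · exact h3 h
    · exact h2 h

lemma orderOf_pow_div_eq {g : G} {d : ℕ} (hd : d ∣ orderOf g) :
    orderOf (g ^ (orderOf g / d)) = d := by
  have h0 : orderOf g ≠ 0 := (orderOf_pos g).ne'
  rw [orderOf_pow, Nat.gcd_eq_right (Nat.div_dvd_of_dvd hd), Nat.div_div_self hd h0]

lemma exists_prime_ne {p : ℕ} (hp : p.Prime) {n : ℕ} (h0 : n ≠ 0) (h : ∀ e, n ≠ p ^ e) :
    ∃ q, q.Prime ∧ q ≠ p ∧ q ∣ n := by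
  by_contra hq
  push_neg at hq
  have huniq : ∀ {d : ℕ}, d.Prime → d ∣ n → d = p := by
    intro d hd hdn
    by_contra hdp
    exact (hq d hd hdp) hdn
  exact h _ (Nat.eq_prime_pow_of_unique_prime_dvd h0 huniq)

lemma distinguish_bigs {p : ℕ} {M C D : Subgroup G} (hMcyc : IsCyclic M)
    (hC : C ∈ inters p M) (hD : D ∈ inters p M) (hCD : C < D)
    {x y : G} (hx : Subgroup.zpowers x = C) (hy : Subgroup.zpowers y = D) :
    (powerGraph G).closedNbhd x ≠ (powerGraph G).closedNbhd y := by
  obtain ⟨N, hN, hCN⟩ := hC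
  obtain ⟨z, hz1, hz2⟩ := exists_zpowers_eq hN.1.1
  have hDM : D ≤ M := by
    obtain ⟨ND, hND, hDN⟩ := hD; rw [hDN]; exact inf_le_left
  apply nbhd_ne_of_witness (z := z)
  · have hxC : x ∈ C := hx ▸ Subgroup.mem_zpowers x
    rw [hCN] at hxC
    rw [hz2]
    exact (Subgroup.mem_inf.mp hxC).2
  · intro hzy
    have hzD : z ∈ D := hy ▸ hzy
    have hNM : N ≤ M := by rw [← hz2]; exact Subgroup.zpowers_le.mpr (hDM hzD)
    have hNeq : N = M := hN.1.2 M hMcyc hNM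
    have hCM : C = M := by rw [hCN, hNeq, inf_idem]
    exact hCD.not_ge (hCM ▸ hDM)
  · intro hyz
    have hyN : y ∈ N := hz2 ▸ hyz
    have hyD : y ∈ D := hy ▸ Subgroup.mem_zpowers y
    have hyC : y ∈ C := by rw [hCN]; exact Subgroup.mem_inf.mpr ⟨hDM hyD, hyN⟩
    exact hCD.not_ge (by rw [← hy]; exact Subgroup.zpowers_le.mpr hyC)

lemma distinguish_low {p q j e : ℕ} (hp : p.Prime) (hq : q.Prime) (hpq : q ≠ p)
    {w x y : G} (hdvd : p ^ j * q ∣ orderOf w)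
    (hx : x ∈ zpowers w) (hox : orderOf x = p ^ j)
    (hoy : orderOf y = p ^ e) (hje : j < e) :
    (powerGraph G).closedNbhd x ≠ (powerGraph G).closedNbhd y := by
  have hoz : orderOf (w ^ (orderOf w / (p ^ j * q))) = p ^ j * q := orderOf_pow_div_eq hdvd
  apply nbhd_ne_of_witness (z := w ^ (orderOf w / (p ^ j * q)))
  · apply mem_zpowers_of_orderOf_dvd hx (Subgroup.pow_mem _ (Subgroup.mem_zpowers w) _)
    rw [hox, hoz]
    exact dvd_mul_right _ _
  · intro h
    have hd := orderOf_dvd_of_mem_zpowers h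
    rw [hoz, hoy] at hd
    have hqe : q ∣ p ^ e := (dvd_mul_left q (p ^ j)).trans hd
    exact hpq ((Nat.prime_dvd_prime_iff_eq hq hp).mp (hq.dvd_of_dvd_pow hqe))
  · intro h
    have hd := orderOf_dvd_of_mem_zpowers h
    rw [hoz, hoy] at hd
    have h1 : p ^ (j + 1) ∣ p ^ j * q := (pow_dvd_pow p hje).trans hd
    rw [pow_succ] at h1
    have h2 : p ∣ q := (Nat.mul_dvd_mul_iff_left (pow_pos hp.pos j)).mp h1
    exact hpq ((Nat.prime_dvd_prime_iff_eq hp hq).mp h2).symm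

lemma clique_of_good {S : Finset G}
    (hcomp : ∀ x ∈ S, ∀ y ∈ S, x ≠ y → x ∈ zpowers y ∨ y ∈ zpowers x)
    (hdist : ∀ x ∈ S, ∀ y ∈ S, x ≠ y →
      (powerGraph G).closedNbhd x ≠ (powerGraph G).closedNbhd y) :
    ∃ T : Finset (Quotient (powerGraph G).nbhdSetoid),
      (powerGraph G).reduced.IsClique ↑T ∧ T.card = S.card := by
  classical
  refine ⟨S.image (Quotient.mk _), ?_, ?_⟩
  · intro a ha b hb hab
    simp only [Finset.coe_image, Set.mem_image, Finset.mem_coe] at ha hb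
    obtain ⟨x, hxS, rfl⟩ := ha
    obtain ⟨y, hyS, rfl⟩ := hb
    have hxy : x ≠ y := fun h => hab (by rw [h])
    exact ⟨hab, x, y, rfl, rfl, hxy, hcomp x hxS y hyS hxy⟩
  · apply Finset.card_image_of_injOn
    intro x hx y hy hxy
    by_contra hne
    exact hdist x (Finset.mem_coe.mp hx) y (Finset.mem_coe.mp hy) hne (Quotient.exact hxy)

end AuxLems

theorem stmt_7 {G : Type*} [Group G] [Finite G] (hnc : ¬ IsCyclic G)
    (p : ℕ) (hp : p.Prime) (hne : (maxCycP p G).Nonempty) :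
    ∃ S : Finset (Quotient (powerGraph G).nbhdSetoid),
      (powerGraph G).reduced.IsClique ↑S ∧ (S.card : ℤ) = alphaP p G := by
  classical
  haveI : Fact p.Prime := ⟨hp⟩
  obtain ⟨M, hM, hMa⟩ := (hne.image (alphaTerm p)).csSup_mem (Set.toFinite _)
  have hA : alphaP p G = alphaTerm p M := hMa.symm
  have hMcyc : IsCyclic M := hM.1.1
  have hMp : IsPGroup p M := hM.2
  have hIle : ∀ C ∈ inters p M, C ≤ M := by rintro C ⟨N, hN, rfl⟩; exact inf_le_left
  have hIpow : ∀ C ∈ inters p M, ∃ e, Nat.card C = p ^ e := fun C hC =>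
    (hMp.to_le (hIle C hC)).exists_card_eq
  obtain ⟨m, hmM, hmz⟩ := exists_zpowers_eq hMcyc
  haveI := hMcyc
  -- generator choice
  have hgen0 : ∀ C : Subgroup G, ∃ gc : G,
      C ∈ inters p M → gc ∈ C ∧ Subgroup.zpowers gc = C := by
    intro C
    by_cases hC : C ∈ inters p M
    · obtain ⟨g, hg1, hg2⟩ := exists_zpowers_eq (Subgroup.isCyclic_of_le (hIle C hC))
      exact ⟨g, fun _ => ⟨hg1, hg2⟩⟩
    · exact ⟨1, fun h => absurd h hC⟩
  choose gg hgg using hgen0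
  have hggM : ∀ C (hC : C ∈ inters p M), gg C ∈ M := fun C hC => hIle C hC ((hgg C hC).1)
  have hggm : ∀ C (hC : C ∈ inters p M), gg C ∈ Subgroup.zpowers m := fun C hC => by
    rw [hmz]; exact hggM C hC
  have hggo : ∀ C (hC : C ∈ inters p M), orderOf (gg C) = Nat.card C := fun C hC =>
    (Nat.card_zpowers (gg C)).symm.trans
      (congrArg (fun H : Subgroup G => Nat.card H) (hgg C hC).2)
  -- distinguishing big pairs
  have hBigPair : ∀ C (_ : C ∈ inters p M), ∀ D (_ : D ∈ inters p M), C ≠ D →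
      (powerGraph G).closedNbhd (gg C) ≠ (powerGraph G).closedNbhd (gg D) := by
    intro C hC D hD hne'
    have hcomp' : C ≤ D ∨ D ≤ C := by
      obtain ⟨e, he⟩ := hIpow C hC
      obtain ⟨f, hf⟩ := hIpow D hD
      rcases le_total e f with h | h
      · left
        rw [← (hgg C hC).2, ← (hgg D hD).2]
        exact Subgroup.zpowers_le.mpr (mem_zpowers_of_orderOf_dvd (hggm C hC) (hggm D hD)
          (by rw [hggo C hC, hggo D hD, he, hf]; exact pow_dvd_pow p h))
      · right
        rw [← (hgg C hC).2, ← (hgg D hD).2]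
        exact Subgroup.zpowers_le.mpr (mem_zpowers_of_orderOf_dvd (hggm D hD) (hggm C hC)
          (by rw [hggo C hC, hggo D hD, he, hf]; exact pow_dvd_pow p h))
    rcases hcomp' with h | h
    · exact distinguish_bigs hMcyc hC hD (lt_of_le_of_ne h hne') (hgg C hC).2 (hgg D hD).2
    · exact (distinguish_bigs hMcyc hD hC (lt_of_le_of_ne h hne'.symm)
        (hgg D hD).2 (hgg C hC).2).symm
  -- the Low/Big partition
  set Low : Set (Subgroup G) :=
    {C | C ∈ inters p M ∧ (Nat.card ↥C : ℚ) ≤ (p : ℚ) ^ lamInt p M} with hLowdef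
  set Big : Set (Subgroup G) := inters p M \ Low with hBigdef
  have hBigI : ∀ C ∈ Big, C ∈ inters p M := fun C hC => hC.1
  have hcount : Big.ncard + Low.ncard = (inters p M).ncard :=
    Set.ncard_diff_add_ncard_of_subset (fun C hC => hC.1) (Set.toFinite _)
  have hBigfin := Set.toFinite Big
  have hS₁card : (hBigfin.toFinset.image gg).card = Big.ncard := by
    rw [Finset.card_image_of_injOn, Set.ncard_eq_toFinset_card Big hBigfin]
    intro C hC D hD hCD
    have hC' : C ∈ Big := hBigfin.mem_toFinset.mp (Finset.mem_coe.mp hC)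
    have hD' : D ∈ Big := hBigfin.mem_toFinset.mp (Finset.mem_coe.mp hD)
    exact ((hgg C (hBigI C hC')).2.symm.trans (congrArg Subgroup.zpowers hCD)).trans
      (hgg D (hBigI D hD')).2
  have hS₁mem : ∀ x ∈ hBigfin.toFinset.image gg, ∃ C ∈ Big, gg C = x := by
    intro x hx
    simp only [Finset.mem_image, Set.Finite.mem_toFinset] at hx
    obtain ⟨C, hC, rfl⟩ := hx; exact ⟨C, hC, rfl⟩
  have hsP : sPrimeNum p M = Low.ncard + 1 := by
    unfold sPrimeNum
    rw [← hLowdef, Nat.card_coe_set_eq]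
  have hsN : sNum p M = (inters p M).ncard := by
    unfold sNum
    rw [Nat.card_coe_set_eq]
  by_cases hEx : {N : Subgroup G | IsMaxCyclic N ∧ ¬ IsPGroup p N}.Nonempty
  · -- there are maximal cyclic subgroups that are not p-groups
    have hKne : {k | ∃ N : Subgroup G, IsMaxCyclic N ∧ ¬ IsPGroup p N ∧
        k = Nat.card ↥(M ⊓ N)}.Nonempty := by
      obtain ⟨N, hN⟩ := hEx; exact ⟨_, N, hN.1, hN.2, rfl⟩
    have hKfin : {k | ∃ N : Subgroup G, IsMaxCyclic N ∧ ¬ IsPGroup p N ∧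
        k = Nat.card ↥(M ⊓ N)}.Finite := by
      apply Set.Finite.subset (Set.finite_range (fun N : Subgroup G => Nat.card ↥(M ⊓ N)))
      rintro k ⟨N, h1, h2, rfl⟩; exact ⟨N, rfl⟩
    obtain ⟨N', hN'max, hN'notp, hk₀⟩ := hKne.csSup_mem hKfin
    obtain ⟨lam0, hlam0⟩ := ((hMp.to_le inf_le_left : IsPGroup p ↥(M ⊓ N'))).exists_card_eq
    have hlam : lamInt p M = (lam0 : ℤ) := by
      unfold lamInt
      rw [if_pos hEx, hk₀, hlam0, padicValNat.prime_pow]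
    have hbig : ∀ C ∈ Big, ∃ e, Nat.card ↥C = p ^ e ∧ lam0 < e := by
      intro C hC
      obtain ⟨e, he⟩ := hIpow C (hBigI C hC)
      refine ⟨e, he, ?_⟩
      have hnotle : ¬ ((Nat.card ↥C : ℚ) ≤ (p : ℚ) ^ lamInt p M) := fun hcon =>
        hC.2 ⟨hBigI C hC, hcon⟩
      rw [hlam, zpow_natCast] at hnotle
      have hlt : (p : ℚ) ^ lam0 < (Nat.card ↥C : ℚ) := not_le.mp hnotle
      rw [he] at hlt
      have hlt' : (p : ℕ) ^ lam0 < p ^ e := by exact_mod_cast hlt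
      exact (Nat.pow_lt_pow_iff_right hp.one_lt).mp hlt'
    obtain ⟨w, hwN, hwz⟩ := exists_zpowers_eq hN'max.1
    have hwo : orderOf w = Nat.card ↥N' := by rw [← hwz, Nat.card_zpowers]
    obtain ⟨q, hq, hqp, hqd⟩ := exists_prime_ne hp (Nat.card_pos (α := ↥N')).ne'
      (fun e he => hN'notp (IsPGroup.iff_card.mpr ⟨e, he⟩))
    obtain ⟨c, hcC, hcz⟩ := exists_zpowers_eq
      (Subgroup.isCyclic_of_le (inf_le_left : M ⊓ N' ≤ M))
    have hco : orderOf c = p ^ lam0 := by rw [← Nat.card_zpowers, hcz, hlam0]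
    have hcw : c ∈ Subgroup.zpowers w := by rw [hwz]; exact (Subgroup.mem_inf.mp hcC).2
    have hcM : c ∈ M := (Subgroup.mem_inf.mp hcC).1
    have hdvdn : ∀ j ≤ lam0, p ^ j * q ∣ orderOf w := by
      intro j hj
      rw [hwo]
      refine Nat.Coprime.mul_dvd_of_dvd_of_dvd ?_ ?_ hqd
      · exact Nat.Coprime.pow_left j ((Nat.coprime_primes hp hq).mpr (Ne.symm hqp))
      · calc p ^ j ∣ p ^ lam0 := pow_dvd_pow p hj
          _ = Nat.card ↥(M ⊓ N') := hlam0.symm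
          _ ∣ Nat.card ↥N' := Subgroup.card_dvd_of_le inf_le_right
    have hxo : ∀ j ≤ lam0, orderOf (c ^ (p ^ lam0 / p ^ j)) = p ^ j := by
      intro j hj
      have hd : p ^ j ∣ orderOf c := hco ▸ pow_dvd_pow p hj
      have heq : p ^ lam0 / p ^ j = orderOf c / p ^ j := by rw [hco]
      rw [heq]
      exact orderOf_pow_div_eq hd
    have hxw : ∀ j : ℕ, c ^ (p ^ lam0 / p ^ j) ∈ Subgroup.zpowers w := fun j =>
      Subgroup.pow_mem _ hcw _
    have hxm : ∀ j : ℕ, c ^ (p ^ lam0 / p ^ j) ∈ Subgroup.zpowers m := fun j => by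
      rw [hmz]; exact Subgroup.pow_mem _ hcM _
    have hS₂mem : ∀ x ∈ (Finset.range (lam0 + 1)).image (fun j => c ^ (p ^ lam0 / p ^ j)),
        ∃ j ≤ lam0, c ^ (p ^ lam0 / p ^ j) = x := by
      intro x hx
      simp only [Finset.mem_image, Finset.mem_range] at hx
      obtain ⟨j, hj, rfl⟩ := hx; exact ⟨j, Nat.lt_succ_iff.mp hj, rfl⟩
    have hS₂card : ((Finset.range (lam0 + 1)).image (fun j => c ^ (p ^ lam0 / p ^ j))).card
        = lam0 + 1 := by
      rw [Finset.card_image_of_injOn, Finset.card_range]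
      intro a ha b hb hab
      simp only [Finset.coe_range, Set.mem_Iio, Nat.lt_succ_iff] at ha hb
      have hab' : c ^ (p ^ lam0 / p ^ a) = c ^ (p ^ lam0 / p ^ b) := hab
      have : p ^ a = p ^ b := by rw [← hxo a ha, ← hxo b hb, hab']
      exact Nat.pow_right_injective hp.two_le this
    have hdisj : Disjoint (hBigfin.toFinset.image gg)
        ((Finset.range (lam0 + 1)).image (fun j => c ^ (p ^ lam0 / p ^ j))) := by
      rw [Finset.disjoint_left]
      intro x hx1 hx2
      obtain ⟨C, hC, hCx⟩ := hS₁mem x hx1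
      obtain ⟨j, hj, hjx⟩ := hS₂mem x hx2
      obtain ⟨e, he, hlt⟩ := hbig C hC
      have h1 : orderOf x = p ^ e := by rw [← hCx, hggo C (hBigI C hC), he]
      have h2 : orderOf x = p ^ j := by rw [← hjx]; exact hxo j hj
      have : e = j := Nat.pow_right_injective hp.two_le (h1.symm.trans h2)
      omega
    have hordS : ∀ x ∈ hBigfin.toFinset.image gg ∪
        (Finset.range (lam0 + 1)).image (fun j => c ^ (p ^ lam0 / p ^ j)),
        x ∈ Subgroup.zpowers m ∧ ∃ e, orderOf x = p ^ e := by
      intro x hx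
      rcases Finset.mem_union.mp hx with hx | hx
      · obtain ⟨C, hC, rfl⟩ := hS₁mem x hx
        refine ⟨hggm C (hBigI C hC), ?_⟩
        obtain ⟨e, he, _⟩ := hbig C hC
        exact ⟨e, by rw [hggo C (hBigI C hC), he]⟩
      · obtain ⟨j, hj, rfl⟩ := hS₂mem x hx
        exact ⟨hxm j, j, hxo j hj⟩
    have hcomp : ∀ x ∈ hBigfin.toFinset.image gg ∪
        (Finset.range (lam0 + 1)).image (fun j => c ^ (p ^ lam0 / p ^ j)),
        ∀ y ∈ hBigfin.toFinset.image gg ∪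
        (Finset.range (lam0 + 1)).image (fun j => c ^ (p ^ lam0 / p ^ j)),
        x ≠ y → x ∈ Subgroup.zpowers y ∨ y ∈ Subgroup.zpowers x := by
      intro x hx y hy _
      obtain ⟨hxm', e, he⟩ := hordS x hx
      obtain ⟨hym', f, hf⟩ := hordS y hy
      rcases le_total e f with h | h
      · exact Or.inl (mem_zpowers_of_orderOf_dvd hxm' hym'
          (by rw [he, hf]; exact pow_dvd_pow p h))
      · exact Or.inr (mem_zpowers_of_orderOf_dvd hym' hxm'
          (by rw [he, hf]; exact pow_dvd_pow p h))
    have hdist : ∀ x ∈ hBigfin.toFinset.image gg ∪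
        (Finset.range (lam0 + 1)).image (fun j => c ^ (p ^ lam0 / p ^ j)),
        ∀ y ∈ hBigfin.toFinset.image gg ∪
        (Finset.range (lam0 + 1)).image (fun j => c ^ (p ^ lam0 / p ^ j)),
        x ≠ y → (powerGraph G).closedNbhd x ≠ (powerGraph G).closedNbhd y := by
      intro x hx y hy hxy
      rcases Finset.mem_union.mp hx with hx' | hx' <;>
        rcases Finset.mem_union.mp hy with hy' | hy'
      · obtain ⟨C, hC, rfl⟩ := hS₁mem x hx'
        obtain ⟨D, hD, rfl⟩ := hS₁mem y hy'
        exact hBigPair C (hBigI C hC) D (hBigI D hD) (fun h => hxy (by rw [h]))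
      · obtain ⟨C, hC, rfl⟩ := hS₁mem x hx'
        obtain ⟨j, hj, rfl⟩ := hS₂mem y hy'
        obtain ⟨e, he, hlt⟩ := hbig C hC
        exact (distinguish_low hp hq hqp (hdvdn j hj) (hxw j) (hxo j hj)
          (by rw [hggo C (hBigI C hC), he]) (lt_of_le_of_lt hj hlt)).symm
      · obtain ⟨j, hj, rfl⟩ := hS₂mem x hx'
        obtain ⟨C, hC, rfl⟩ := hS₁mem y hy'
        obtain ⟨e, he, hlt⟩ := hbig C hC
        exact distinguish_low hp hq hqp (hdvdn j hj) (hxw j) (hxo j hj)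
          (by rw [hggo C (hBigI C hC), he]) (lt_of_le_of_lt hj hlt)
      · obtain ⟨j, hj, rfl⟩ := hS₂mem x hx'
        obtain ⟨k, hk, rfl⟩ := hS₂mem y hy'
        have hjk : j ≠ k := fun h => hxy (by rw [h])
        rcases lt_or_gt_of_ne hjk with h | h
        · exact distinguish_low hp hq hqp (hdvdn j hj) (hxw j) (hxo j hj) (hxo k hk) h
        · exact (distinguish_low hp hq hqp (hdvdn k hk) (hxw k) (hxo k hk) (hxo j hj) h).symm
    obtain ⟨T, hT1, hT2⟩ := clique_of_good hcomp hdist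
    refine ⟨T, hT1, ?_⟩
    rw [hT2, hA]
    unfold alphaTerm
    rw [hsN, hsP, hlam, Finset.card_union_of_disjoint hdisj, hS₁card, hS₂card]
    push_cast
    omega
  · -- all maximal cyclic subgroups are p-groups
    have hlam : lamInt p M = -1 := by unfold lamInt; rw [if_neg hEx]
    have hLow0 : Low = ∅ := by
      rw [hLowdef]
      ext C
      simp only [Set.mem_setOf_eq, Set.mem_empty_iff_false, iff_false, not_and]
      intro hCI hle
      rw [hlam] at hle
      have h1 : (1 : ℚ) ≤ (Nat.card ↥C : ℚ) := by exact_mod_cast Nat.card_pos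
      have hp1 : (1 : ℚ) < p := by exact_mod_cast hp.one_lt
      have h2 : (p : ℚ) ^ (-1 : ℤ) < 1 := by
        rw [zpow_neg, zpow_one]
        exact inv_lt_one_of_one_lt₀ hp1
      linarith
    have hLowncard : Low.ncard = 0 := by rw [hLow0]; exact Set.ncard_empty _
    have hdist : ∀ x ∈ hBigfin.toFinset.image gg, ∀ y ∈ hBigfin.toFinset.image gg,
        x ≠ y → (powerGraph G).closedNbhd x ≠ (powerGraph G).closedNbhd y := by
      intro x hx y hy hxy
      obtain ⟨C, hC, rfl⟩ := hS₁mem x hx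
      obtain ⟨D, hD, rfl⟩ := hS₁mem y hy
      exact hBigPair C (hBigI C hC) D (hBigI D hD) (fun h => hxy (by rw [h]))
    have hcomp : ∀ x ∈ hBigfin.toFinset.image gg, ∀ y ∈ hBigfin.toFinset.image gg,
        x ≠ y → x ∈ Subgroup.zpowers y ∨ y ∈ Subgroup.zpowers x := by
      intro x hx y hy _
      obtain ⟨C, hC, rfl⟩ := hS₁mem x hx
      obtain ⟨D, hD, rfl⟩ := hS₁mem y hy
      obtain ⟨e, he⟩ := hIpow C (hBigI C hC)
      obtain ⟨f, hf⟩ := hIpow D (hBigI D hD)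
      rcases le_total e f with h | h
      · exact Or.inl (mem_zpowers_of_orderOf_dvd (hggm C (hBigI C hC)) (hggm D (hBigI D hD))
          (by rw [hggo C (hBigI C hC), hggo D (hBigI D hD), he, hf]; exact pow_dvd_pow p h))
      · exact Or.inr (mem_zpowers_of_orderOf_dvd (hggm D (hBigI D hD)) (hggm C (hBigI C hC))
          (by rw [hggo C (hBigI C hC), hggo D (hBigI D hD), he, hf]; exact pow_dvd_pow p h))
    obtain ⟨T, hT1, hT2⟩ := clique_of_good hcomp hdist
    refine ⟨T, hT1, ?_⟩
    rw [hT2, hA]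
    unfold alphaTerm
    rw [hsN, hsP, hlam, hS₁card]
    rw [hLowncard] at hcount
    push_cast
    omega
end

section
/- Let G be a noncyclic finite CP-group (every element has prime power order) of order n. Then ω(R_G) = max{α_p : p prime dividing n}, where R_G is the reduced graph of the power graph of G. -/
lemma Set.Finite.exists_maximal_wrt {α β : Type*} [PartialOrder β] (f : α → β) (s : Set α)
    (h : s.Finite) (hs : s.Nonempty) : ∃ a ∈ s, ∀ a' ∈ s, f a ≤ f a' → f a = f a' := by
  obtain ⟨a, ha, hmax⟩ := Set.Finite.exists_maximalFor f s h hs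
  exact ⟨a, ha, fun a' ha' hle => le_antisymm hle (hmax ha' hle)⟩

lemma Set.Finite.exists_minimal_wrt {α β : Type*} [PartialOrder β] (f : α → β) (s : Set α)
    (h : s.Finite) (hs : s.Nonempty) : ∃ a ∈ s, ∀ a' ∈ s, f a' ≤ f a → f a = f a' := by
  obtain ⟨a, ha, hmin⟩ := Set.Finite.exists_minimalFor f s h hs
  exact ⟨a, ha, fun a' ha' hle => le_antisymm (hmin ha' hle) hle⟩

open Subgroup

lemma isCyclic_zpowers' {G : Type*} [Group G] (g : G) : IsCyclic ↥(Subgroup.zpowers g) :=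
  isCyclic_of_surjective (zpowersHom G g).rangeRestrict (fun x => by
    obtain ⟨k, hk⟩ := Subgroup.mem_zpowers_iff.mp x.2
    exact ⟨Multiplicative.ofAdd k, Subtype.ext hk⟩)

section AuxA
variable {G : Type*} [Group G] [Finite G]
set_option linter.unusedSectionVars false

lemma exists_gen_of_cyclic {M : Subgroup G} (h : IsCyclic ↥M) : ∃ g : G, g ∈ M ∧ M = zpowers g := by
  obtain ⟨g, hg⟩ := h.exists_generator
  refine ⟨g, g.2, le_antisymm (fun x hx => ?_) (zpowers_le.mpr g.2)⟩
  obtain ⟨k, hk⟩ := mem_zpowers_iff.mp (hg ⟨x, hx⟩)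
  refine mem_zpowers_iff.mpr ⟨k, ?_⟩
  have := congrArg Subtype.val hk
  simpa using this

lemma exists_maxCyclic_ge {H : Subgroup G} (hH : IsCyclic ↥H) : ∃ M, IsMaxCyclic M ∧ H ≤ M := by
  have hfin : {K : Subgroup G | IsCyclic ↥K ∧ H ≤ K}.Finite := Set.toFinite _
  obtain ⟨M, hMmem, hmax⟩ := hfin.exists_maximal_wrt id _ ⟨H, hH, le_rfl⟩
  exact ⟨M, ⟨hMmem.1, fun N hN hMN => hmax N ⟨hN, hMmem.2.trans hMN⟩ hMN⟩, hMmem.2⟩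

lemma exists_maxCyclic_mem (x : G) : ∃ M, IsMaxCyclic M ∧ x ∈ M := by
  obtain ⟨M, hM, hle⟩ := exists_maxCyclic_ge (H := zpowers x) (isCyclic_zpowers' x)
  exact ⟨M, hM, hle (mem_zpowers x)⟩

lemma IsMaxCyclic.exists_gen {M : Subgroup G} (hM : IsMaxCyclic M) :
    ∃ g : G, g ∈ M ∧ M = zpowers g := exists_gen_of_cyclic hM.1

lemma IsMaxCyclic.ne_bot [Nontrivial G] {M : Subgroup G} (hM : IsMaxCyclic M) : M ≠ ⊥ := by
  rintro rfl
  obtain ⟨g, hg⟩ := exists_ne (1 : G)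
  exact hg (zpowers_eq_bot.mp (hM.2 (zpowers g) (isCyclic_zpowers' g) bot_le).symm)

lemma IsMaxCyclic.exists_prime (hcp : IsCPGroup G) {M : Subgroup G} (hM : IsMaxCyclic M)
    (hb : M ≠ ⊥) : ∃ p k : ℕ, p.Prime ∧ 0 < k ∧ Nat.card ↥M = p ^ k := by
  obtain ⟨g, hgM, rfl⟩ := hM.exists_gen
  have hg1 : g ≠ 1 := fun h => hb (zpowers_eq_bot.mpr h)
  obtain ⟨p, k, hp, hk, hpk⟩ := hcp g hg1
  exact ⟨p, k, Nat.prime_iff.mpr hp, hk, by rw [Nat.card_zpowers]; exact hpk.symm⟩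

lemma mem_zpowers_of_orderOf_dvd_s9 {H : Type*} [Group H] [Finite H] [IsCyclic H] {x y : H}
    (h : orderOf x ∣ orderOf y) : x ∈ zpowers y := by
  classical
  cases nonempty_fintype H
  have hd0 : 0 < orderOf y := orderOf_pos y
  have hcardle := IsCyclic.card_pow_eq_one_le (α := H) hd0
  set S : Finset H := {a : H | a ^ orderOf y = 1} with hS
  set T : Finset H := Finset.univ.filter (fun a => a ∈ zpowers y) with hT
  have hTS : T ⊆ S := by
    intro a ha
    rw [hT, Finset.mem_filter] at ha
    have := orderOf_dvd_of_mem_zpowers ha.2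
    simp only [hS, Finset.mem_filter, Finset.mem_univ, true_and, Set.mem_setOf_eq]
    exact orderOf_dvd_iff_pow_eq_one.mp this
  have hTcard : T.card = orderOf y := by
    rw [hT, ← Fintype.card_zpowers (x := y), Fintype.card_subtype]
  have hST : T = S := Finset.eq_of_subset_of_card_le hTS (by rw [hTcard]; exact hcardle)
  have hxS : x ∈ S := by
    simp only [hS, Finset.mem_filter, Finset.mem_univ, true_and, Set.mem_setOf_eq]
    exact orderOf_dvd_iff_pow_eq_one.mp h
  rw [← hST, hT, Finset.mem_filter] at hxS
  exact hxS.2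

lemma cyclic_pgroup_comparable {H : Type*} [Group H] [Finite H] [IsCyclic H] {p : ℕ}
    (hp : p.Prime) (h : IsPGroup p H) (x y : H) : x ∈ zpowers y ∨ y ∈ zpowers x := by
  haveI : Fact p.Prime := ⟨hp⟩
  obtain ⟨a, ha⟩ := (IsPGroup.iff_orderOf.mp h) x
  obtain ⟨b, hb⟩ := (IsPGroup.iff_orderOf.mp h) y
  rcases le_total a b with hab | hab
  · exact Or.inl (mem_zpowers_of_orderOf_dvd_s9 (by rw [ha, hb]; exact pow_dvd_pow p hab))
  · exact Or.inr (mem_zpowers_of_orderOf_dvd_s9 (by rw [ha, hb]; exact pow_dvd_pow p hab))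

lemma coe_mem_zpowers_of_mem {M : Subgroup G} {x y : ↥M} (h : x ∈ zpowers y) :
    (x : G) ∈ zpowers (y : G) := by
  obtain ⟨k, hk⟩ := mem_zpowers_iff.mp h
  refine mem_zpowers_iff.mpr ⟨k, ?_⟩
  have := congrArg Subtype.val hk
  simpa using this

lemma maxCyclic_comparable (hcp : IsCPGroup G) {M : Subgroup G} (hM : IsMaxCyclic M) {x y : G}
    (hx : x ∈ M) (hy : y ∈ M) : x ∈ zpowers y ∨ y ∈ zpowers x := by
  by_cases hb : M = ⊥
  · subst hb
    rw [Subgroup.mem_bot] at hx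
    subst hx
    exact Or.inl (one_mem _)
  · obtain ⟨p, k, hp, hk, hcard⟩ := hM.exists_prime hcp hb
    haveI : IsCyclic ↥M := hM.1
    have hpg : IsPGroup p ↥M := IsPGroup.of_card hcard
    rcases cyclic_pgroup_comparable hp hpg (⟨x, hx⟩ : ↥M) ⟨y, hy⟩ with h | h
    · exact Or.inl (coe_mem_zpowers_of_mem h)
    · exact Or.inr (coe_mem_zpowers_of_mem h)

end AuxA


section AuxB
variable {G : Type*} [Group G] [Finite G]
set_option linter.unusedSectionVars false

/-- The set of maximal cyclic subgroups containing `x`. -/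
def mcSet {G : Type*} [Group G] (x : G) : Set (Subgroup G) := {N | IsMaxCyclic N ∧ x ∈ N}

lemma mem_closedNbhd_iff (hcp : IsCPGroup G) {x y : G} :
    y ∈ (powerGraph G).closedNbhd x ↔ ∃ N, N ∈ mcSet x ∧ y ∈ N := by
  constructor
  · intro hy
    rcases Set.mem_insert_iff.mp hy with rfl | hadj
    · obtain ⟨M, hM, hxM⟩ := exists_maxCyclic_mem y
      exact ⟨M, ⟨hM, hxM⟩, hxM⟩
    · have h' : x ≠ y ∧ (x ∈ zpowers y ∨ y ∈ zpowers x) := hadj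
      rcases h'.2 with h | h
      · obtain ⟨M, hM, hyM⟩ := exists_maxCyclic_mem y
        exact ⟨M, ⟨hM, zpowers_le.mpr hyM h⟩, hyM⟩
      · obtain ⟨M, hM, hxM⟩ := exists_maxCyclic_mem x
        exact ⟨M, ⟨hM, hxM⟩, zpowers_le.mpr hxM h⟩
  · rintro ⟨N, ⟨hN, hxN⟩, hyN⟩
    by_cases hxy : y = x
    · exact Set.mem_insert_iff.mpr (Or.inl hxy)
    · refine Set.mem_insert_iff.mpr (Or.inr ?_)
      show (powerGraph G).Adj x y
      exact ⟨fun h => hxy h.symm, maxCyclic_comparable hcp hN hxN hyN⟩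

lemma closedNbhd_eq_iff (hcp : IsCPGroup G) (x y : G) :
    (powerGraph G).closedNbhd x = (powerGraph G).closedNbhd y ↔ mcSet x = mcSet y := by
  constructor
  · intro h
    have key : ∀ a b : G, (powerGraph G).closedNbhd a = (powerGraph G).closedNbhd b →
        mcSet a ⊆ mcSet b := by
      intro a b hab N hN
      obtain ⟨g, hgN, hgen⟩ := hN.1.exists_gen
      have hg : g ∈ (powerGraph G).closedNbhd a := (mem_closedNbhd_iff hcp).mpr ⟨N, hN, hgN⟩
      rw [hab] at hg
      obtain ⟨N', hN', hgN'⟩ := (mem_closedNbhd_iff hcp).mp hg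
      have hle : N ≤ N' := by rw [hgen]; exact zpowers_le.mpr hgN'
      have heq := hN.1.2 N' hN'.1.1 hle
      exact ⟨hN.1, by rw [heq]; exact hN'.2⟩
    exact Set.Subset.antisymm (key x y h) (key y x h.symm)
  · intro h
    ext z
    rw [mem_closedNbhd_iff hcp, mem_closedNbhd_iff hcp, h]

lemma mk_eq_mk_iff (hcp : IsCPGroup G) {x y : G} :
    Quotient.mk (powerGraph G).nbhdSetoid x = Quotient.mk (powerGraph G).nbhdSetoid y ↔
      mcSet x = mcSet y := by
  rw [← closedNbhd_eq_iff hcp]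
  exact ⟨Quotient.exact, fun h => Quotient.sound (h : (powerGraph G).nbhdSetoid.r x y)⟩

lemma adj_iff (hcp : IsCPGroup G) {x y : G} :
    (powerGraph G).Adj x y ↔ x ≠ y ∧ ∃ N, N ∈ mcSet x ∧ y ∈ N := by
  constructor
  · intro h
    have h' : x ≠ y ∧ (x ∈ zpowers y ∨ y ∈ zpowers x) := h
    refine ⟨h'.1, ?_⟩
    have : y ∈ (powerGraph G).closedNbhd x := Set.mem_insert_iff.mpr (Or.inr h)
    exact (mem_closedNbhd_iff hcp).mp this
  · rintro ⟨hne, N, hNx, hyN⟩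
    have hmem : y ∈ (powerGraph G).closedNbhd x := (mem_closedNbhd_iff hcp).mpr ⟨N, hNx, hyN⟩
    rcases Set.mem_insert_iff.mp hmem with h | h
    · exact absurd h.symm hne
    · exact h

lemma red_adj (hcp : IsCPGroup G) {x y : G} :
    (powerGraph G).reduced.Adj (Quotient.mk (powerGraph G).nbhdSetoid x)
      (Quotient.mk (powerGraph G).nbhdSetoid y) ↔
      mcSet x ≠ mcSet y ∧ ∃ N, N ∈ mcSet x ∧ N ∈ mcSet y := by
  constructor
  · rintro ⟨hne, x', y', hx', hy', hadj⟩
    have hx'' : mcSet x' = mcSet x := (mk_eq_mk_iff hcp).mp hx'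
    have hy'' : mcSet y' = mcSet y := (mk_eq_mk_iff hcp).mp hy'
    obtain ⟨hne', N, hNx', hy'N⟩ := (adj_iff hcp).mp hadj
    refine ⟨fun h => hne ((mk_eq_mk_iff hcp).mpr h), N, hx'' ▸ hNx', ?_⟩
    have hmem : N ∈ mcSet y' := ⟨hNx'.1, hy'N⟩
    exact hy'' ▸ hmem
  · rintro ⟨hne, N, hNx, hNy⟩
    refine ⟨fun h => hne ((mk_eq_mk_iff hcp).mp h), x, y, rfl, rfl,
      (adj_iff hcp).mpr ⟨?_, N, hNx, hNy.2⟩⟩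
    rintro rfl; exact hne rfl

lemma card_image_eq_of_iff {α β γ : Type*} (f : α → β) (g : α → γ) (s : Set α)
    (h : ∀ x ∈ s, ∀ y ∈ s, (f x = f y ↔ g x = g y)) :
    Nat.card (f '' s) = Nat.card (g '' s) := by
  have hex : ∀ b : f '' s, ∃ x, x ∈ s ∧ f x = (b : β) := by
    rintro ⟨b, x, hx, rfl⟩; exact ⟨x, hx, rfl⟩
  choose r hr1 hr2 using hex
  refine Nat.card_eq_of_bijective (fun b => ⟨g (r b), ⟨r b, hr1 b, rfl⟩⟩) ⟨?_, ?_⟩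
  · intro b1 b2 hb
    have h1 : g (r b1) = g (r b2) := congrArg Subtype.val hb
    have h2 := (h _ (hr1 b1) _ (hr1 b2)).mpr h1
    exact Subtype.ext (by rw [← hr2 b1, ← hr2 b2, h2])
  · rintro ⟨c, x, hx, rfl⟩
    refine ⟨⟨f x, Set.mem_image_of_mem f hx⟩, ?_⟩
    exact Subtype.ext ((h _ (hr1 _) _ hx).mp (hr2 _))

lemma card_mk_image (hcp : IsCPGroup G) (s : Set G) :
    Nat.card (Quotient.mk (powerGraph G).nbhdSetoid '' s) = Nat.card (mcSet '' s) :=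
  card_image_eq_of_iff _ _ s (fun x _ y _ => mk_eq_mk_iff hcp)

end AuxB


section AuxC
variable {G : Type*} [Group G] [Finite G]
set_option linter.unusedSectionVars false
set_option linter.unusedVariables false

/-- Number of closed-neighborhood classes inside `M`. -/
noncomputable def ccM {G : Type*} [Group G] (M : Subgroup G) : ℕ :=
  Nat.card (mcSet '' (M : Set G))

lemma clique_bound (hcp : IsCPGroup G) {n : ℕ} {t : Finset (Quotient (powerGraph G).nbhdSetoid)}
    (ht : (powerGraph G).reduced.IsNClique n t) :
    ∃ M : Subgroup G, IsMaxCyclic M ∧ n ≤ ccM M := by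
  classical
  rcases t.eq_empty_or_nonempty with rfl | hne
  · obtain ⟨M, hM, _⟩ := exists_maxCyclic_mem (1 : G)
    exact ⟨M, hM, by rw [← ht.2]; simp⟩
  have hadj : ∀ a ∈ t, ∀ b ∈ t, a ≠ b →
      ∃ N, IsMaxCyclic N ∧ Quotient.out a ∈ N ∧ Quotient.out b ∈ N := by
    intro a ha b hb hab
    have h := ht.1 ha hb hab
    rw [← Quotient.out_eq a, ← Quotient.out_eq b] at h
    obtain ⟨hne', N, hNa, hNb⟩ := (red_adj hcp).mp h
    exact ⟨N, hNa.1, hNa.2, hNb.2⟩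
  have hfin : ((fun a : Quotient (powerGraph G).nbhdSetoid =>
      zpowers (Quotient.out a)) '' (t : Set _)).Finite := Set.toFinite _
  obtain ⟨a1, ha1⟩ := hne
  obtain ⟨Z, hZmem, hZmax⟩ := hfin.exists_maximal_wrt id _ ⟨_, ⟨a1, ha1, rfl⟩⟩
  obtain ⟨a0, ha0t, ha0⟩ := hZmem
  obtain ⟨M, hM, hMle⟩ := exists_maxCyclic_ge (H := zpowers (Quotient.out a0))
    (isCyclic_zpowers' _)
  refine ⟨M, hM, ?_⟩
  have hout : ∀ a ∈ t, Quotient.out a ∈ M := by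
    intro a ha
    by_cases h : a = a0
    · subst h; exact hMle (mem_zpowers _)
    · obtain ⟨N, hN, haN, ha0N⟩ := hadj a ha a0 ha0t h
      rcases maxCyclic_comparable hcp hN haN ha0N with h' | h'
      · exact hMle h'
      · have hle : Z ≤ zpowers (Quotient.out a) := by
          rw [← ha0]; exact zpowers_le.mpr h'
        have heq : Z = zpowers (Quotient.out a) := hZmax _ ⟨a, ha, rfl⟩ hle
        have hmem : Quotient.out a ∈ Z := heq ▸ mem_zpowers _
        rw [← ha0] at hmem
        exact hMle hmem
  have hsub : (t : Set _) ⊆ Quotient.mk (powerGraph G).nbhdSetoid '' (M : Set G) := by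
    intro a ha
    exact ⟨Quotient.out a, hout a ha, Quotient.out_eq a⟩
  have hcard : n = Nat.card (t : Set (Quotient (powerGraph G).nbhdSetoid)) := by
    rw [Nat.card_coe_set_eq, Set.ncard_coe_finset, ht.2]
  rw [hcard]
  calc Nat.card (t : Set (Quotient (powerGraph G).nbhdSetoid))
      ≤ Nat.card (Quotient.mk (powerGraph G).nbhdSetoid '' (M : Set G)) :=
        Nat.card_mono (Set.toFinite _) hsub
    _ = ccM M := card_mk_image hcp _

lemma clique_exists (hcp : IsCPGroup G) {M : Subgroup G} (hM : IsMaxCyclic M) :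
    ∃ t : Finset (Quotient (powerGraph G).nbhdSetoid),
      (powerGraph G).reduced.IsNClique (ccM M) t := by
  classical
  have hfinM : (M : Set G).Finite := Set.toFinite _
  refine ⟨hfinM.toFinset.image (Quotient.mk (powerGraph G).nbhdSetoid), ?_, ?_⟩
  · intro a ha b hb hab
    simp only [Finset.coe_image, Set.mem_image, Set.Finite.coe_toFinset] at ha hb
    obtain ⟨x, hx, rfl⟩ := ha
    obtain ⟨y, hy, rfl⟩ := hb
    exact (red_adj hcp).mpr ⟨fun h => hab ((mk_eq_mk_iff hcp).mpr h), M, ⟨hM, hx⟩, ⟨hM, hy⟩⟩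
  · have h1 : (hfinM.toFinset.image (Quotient.mk (powerGraph G).nbhdSetoid) : Set _) =
        Quotient.mk (powerGraph G).nbhdSetoid '' (M : Set G) := by
      simp [Finset.coe_image, Set.Finite.coe_toFinset]
    show _ = Nat.card (mcSet '' (M : Set G))
    rw [← card_mk_image hcp (M : Set G), ← h1, Nat.card_coe_set_eq, Set.ncard_coe_finset]

lemma cliqueNum_spec (hcp : IsCPGroup G) :
    ∃ M0 : Subgroup G, IsMaxCyclic M0 ∧ (powerGraph G).reduced.cliqueNum = ccM M0 ∧
      ∀ M : Subgroup G, IsMaxCyclic M → ccM M ≤ ccM M0 := by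
  classical
  have hfin : {M : Subgroup G | IsMaxCyclic M}.Finite := Set.toFinite _
  obtain ⟨M1, hM1, _⟩ := exists_maxCyclic_mem (1 : G)
  obtain ⟨M0, hM0, hmax⟩ := hfin.exists_maximal_wrt ccM _ ⟨M1, hM1⟩
  have hmax' : ∀ M : Subgroup G, IsMaxCyclic M → ccM M ≤ ccM M0 := by
    intro M hM
    rcases le_total (ccM M) (ccM M0) with h | h
    · exact h
    · exact (hmax M hM h).ge
  refine ⟨M0, hM0, ?_, hmax'⟩
  apply le_antisymm
  · apply csSup_le
    · exact ⟨0, ⟨∅, SimpleGraph.isNClique_empty.mpr rfl⟩⟩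
    · rintro n ⟨t, ht⟩
      obtain ⟨M, hM, hn⟩ := clique_bound hcp ht
      exact hn.trans (hmax' M hM)
  · obtain ⟨t, ht⟩ := clique_exists hcp hM0
    apply le_csSup
    · refine ⟨ccM M0, ?_⟩
      rintro n ⟨t', ht'⟩
      obtain ⟨M, hM, hn⟩ := clique_bound hcp ht'
      exact hn.trans (hmax' M hM)
    · exact ⟨t, ht⟩

end AuxC


section AuxD
variable {G : Type*} [Group G] [Finite G]
set_option linter.unusedSectionVars false
set_option linter.unusedVariables false

lemma inters_le {p : ℕ} {M C : Subgroup G} (hC : C ∈ inters p M) : C ≤ M := by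
  obtain ⟨N, hN, rfl⟩ := hC; exact inf_le_left

lemma self_mem_inters {p : ℕ} {M : Subgroup G} (hM : M ∈ maxCycP p G) : M ∈ inters p M :=
  ⟨M, hM, by simp⟩

lemma subgroups_of_maxCyclic_comparable (hcp : IsCPGroup G) {M : Subgroup G} (hM : IsMaxCyclic M)
    {C C' : Subgroup G} (h : C ≤ M) (h' : C' ≤ M) : C ≤ C' ∨ C' ≤ C := by
  by_cases hcc : C ≤ C'
  · exact Or.inl hcc
  · obtain ⟨x, hxC, hxC'⟩ := SetLike.not_le_iff_exists.mp hcc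
    refine Or.inr fun y hy => ?_
    rcases maxCyclic_comparable hcp hM (h hxC) (h' hy) with hxy | hxy
    · exact absurd (zpowers_le.mpr hy hxy) hxC'
    · exact zpowers_le.mpr hxC hxy

lemma inters_chain (hcp : IsCPGroup G) {p : ℕ} {M : Subgroup G} (hM : IsMaxCyclic M)
    {C C' : Subgroup G} (hC : C ∈ inters p M) (hC' : C' ∈ inters p M) : C ≤ C' ∨ C' ≤ C :=
  subgroups_of_maxCyclic_comparable hcp hM (inters_le hC) (inters_le hC')

/-- The least member of the chain of intersections containing `x`. -/
noncomputable def theta (p : ℕ) {G : Type*} [Group G] (M : Subgroup G) (x : G) : Subgroup G :=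
  sInf {C | C ∈ inters p M ∧ x ∈ C}

lemma theta_spec (hcp : IsCPGroup G) {p : ℕ} {M : Subgroup G} (hMp : M ∈ maxCycP p G)
    {x : G} (hx : x ∈ M) :
    theta p M x ∈ inters p M ∧ x ∈ theta p M x ∧
      ∀ D ∈ inters p M, x ∈ D → theta p M x ≤ D := by
  classical
  have hMmax : IsMaxCyclic M := hMp.1
  have hSne : ({C | C ∈ inters p M ∧ x ∈ C}).Nonempty := ⟨M, self_mem_inters hMp, hx⟩
  have hSfin : ({C | C ∈ inters p M ∧ x ∈ C}).Finite := Set.toFinite _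
  obtain ⟨C0, hC0S, hC0min⟩ := hSfin.exists_minimal_wrt id _ hSne
  have hleast : ∀ D ∈ {C | C ∈ inters p M ∧ x ∈ C}, C0 ≤ D := by
    intro D hD
    rcases inters_chain hcp hMmax hC0S.1 hD.1 with h | h
    · exact h
    · exact (hC0min D hD h).le
  have htheta : theta p M x = C0 := le_antisymm (sInf_le hC0S) (le_sInf hleast)
  rw [htheta]
  exact ⟨hC0S.1, hC0S.2, fun D hD hxD => hleast D ⟨hD, hxD⟩⟩

lemma prime_eq_of_pgroups {p q : ℕ} (hp : p.Prime) (hq : q.Prime) {K : Subgroup G}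
    (h1 : IsPGroup p K) (h2 : IsPGroup q K) (hK : K ≠ ⊥) : p = q := by
  obtain ⟨g, hgK, hg1⟩ : ∃ g, g ∈ K ∧ g ≠ 1 := by
    by_contra h
    push_neg at h
    refine hK ?_
    ext g
    simp only [Subgroup.mem_bot]
    exact ⟨fun hg => h g hg, fun e => e ▸ K.one_mem⟩
  haveI : Fact p.Prime := ⟨hp⟩
  haveI : Fact q.Prime := ⟨hq⟩
  obtain ⟨a, ha⟩ := (IsPGroup.iff_orderOf.mp h1) (⟨g, hgK⟩ : ↥K)
  obtain ⟨b, hb⟩ := (IsPGroup.iff_orderOf.mp h2) (⟨g, hgK⟩ : ↥K)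
  have hgone : (⟨g, hgK⟩ : ↥K) ≠ 1 := fun h => hg1 (by simpa using congrArg Subtype.val h)
  have ha1 : a ≠ 0 := by
    rintro rfl
    rw [pow_zero] at ha
    exact hgone (orderOf_eq_one_iff.mp ha)
  have hdvd : p ∣ q ^ b := by
    rw [← hb, ha]
    exact dvd_pow_self p ha1
  exact (Nat.prime_dvd_prime_iff_eq hp hq).mp (hp.dvd_of_dvd_pow hdvd)

lemma mcSet_eq_filter (hcp : IsCPGroup G) {p : ℕ} (hp : p.Prime) {M : Subgroup G}
    (hMp : M ∈ maxCycP p G) {x : G} (hx : x ∈ M) (hx1 : x ≠ 1) :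
    mcSet x = {N | N ∈ maxCycP p G ∧ theta p M x ≤ M ⊓ N} := by
  obtain ⟨hθI, hθx, hθmin⟩ := theta_spec hcp hMp hx
  ext N
  constructor
  · rintro ⟨hN, hxN⟩
    have hNbot : N ≠ ⊥ := fun h => hx1 (by rw [h] at hxN; exact Subgroup.mem_bot.mp hxN)
    obtain ⟨q, k, hq, hk, hcard⟩ := hN.exists_prime hcp hNbot
    have hqgrp : IsPGroup q ↥N := IsPGroup.of_card hcard
    have hZbot : zpowers x ≠ ⊥ := fun h => hx1 (zpowers_eq_bot.mp h)
    have hpq : p = q := prime_eq_of_pgroups hp hq (hMp.2.to_le (zpowers_le.mpr hx))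
      (hqgrp.to_le (zpowers_le.mpr hxN)) hZbot
    have hNp : N ∈ maxCycP p G := ⟨hN, by rw [hpq]; exact hqgrp⟩
    exact ⟨hNp, hθmin (M ⊓ N) ⟨N, hNp, rfl⟩ ⟨hx, hxN⟩⟩
  · rintro ⟨hNp, hle⟩
    exact ⟨hNp.1, (inf_le_right : M ⊓ N ≤ N) (hle hθx)⟩

lemma mcSet_one' : mcSet (1 : G) = {N : Subgroup G | IsMaxCyclic N} := by
  ext N; simp [mcSet, Subgroup.one_mem]

lemma mcSet_eq_iff_theta (hcp : IsCPGroup G) {p : ℕ} (hp : p.Prime) {M : Subgroup G}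
    (hMp : M ∈ maxCycP p G) {x y : G} (hx : x ∈ M) (hx1 : x ≠ 1) (hy : y ∈ M) (hy1 : y ≠ 1) :
    mcSet x = mcSet y ↔ theta p M x = theta p M y := by
  constructor
  · intro h
    have key : ∀ a b : G, a ∈ M → a ≠ 1 → b ∈ M → b ≠ 1 → mcSet a = mcSet b →
        theta p M b ≤ theta p M a := by
      intro a b ha ha1 hb hb1 hab
      obtain ⟨hθI, hθa, hθmin⟩ := theta_spec hcp hMp ha
      obtain ⟨hθI', hθb, hθmin'⟩ := theta_spec hcp hMp hb
      obtain ⟨Na, hNa, hNaeq⟩ := hθI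
      have hNamem : Na ∈ mcSet a := ⟨hNa.1, (inf_le_right : M ⊓ Na ≤ Na) (hNaeq ▸ hθa)⟩
      rw [hab] at hNamem
      have hbNa : b ∈ M ⊓ Na := ⟨hb, hNamem.2⟩
      exact (hθmin' (M ⊓ Na) ⟨Na, hNa, rfl⟩ hbNa).trans hNaeq.symm.le
    exact le_antisymm (key y x hy hy1 hx hx1 h.symm) (key x y hx hx1 hy hy1 h)
  · intro h
    rw [mcSet_eq_filter hcp hp hMp hx hx1, mcSet_eq_filter hcp hp hMp hy hy1, h]

lemma isCyclic_of_le {C M : Subgroup G} (hM : IsCyclic ↥M) (h : C ≤ M) : IsCyclic ↥C := by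
  haveI := hM
  exact isCyclic_of_surjective (Subgroup.subgroupOfEquivOfLe h)
    (Subgroup.subgroupOfEquivOfLe h).surjective

lemma theta_image (hcp : IsCPGroup G) {p : ℕ} (hp : p.Prime) {M : Subgroup G}
    (hMp : M ∈ maxCycP p G) :
    theta p M '' ((M : Set G) \ {1}) = inters p M \ {⊥} := by
  apply Set.Subset.antisymm
  · rintro C ⟨x, ⟨hxM, hx1'⟩, rfl⟩
    have hx1 : x ≠ 1 := by simpa using hx1'
    obtain ⟨hθI, hθx, -⟩ := theta_spec hcp hMp hxM
    refine ⟨hθI, fun h => hx1 ?_⟩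
    have hbot : theta p M x = ⊥ := h
    rw [hbot] at hθx
    exact Subgroup.mem_bot.mp hθx
  · rintro C ⟨hCI, hCbot'⟩
    have hCbot : C ≠ ⊥ := by simpa using hCbot'
    have hCM : C ≤ M := inters_le hCI
    obtain ⟨g, hgC, hgen⟩ := exists_gen_of_cyclic (isCyclic_of_le hMp.1.1 hCM)
    have hg1 : g ≠ 1 := fun h => hCbot (hgen.trans (zpowers_eq_bot.mpr h))
    refine ⟨g, ⟨hCM hgC, by simpa using hg1⟩, ?_⟩
    obtain ⟨hθI, hθg, hθmin⟩ := theta_spec hcp hMp (hCM hgC)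
    apply le_antisymm (hθmin C hCI hgC)
    rw [hgen]
    exact zpowers_le.mpr hθg

end AuxD


section AuxE
variable {G : Type*} [Group G] [Finite G]
set_option linter.unusedSectionVars false
set_option linter.unusedVariables false

lemma card_one_of_le_one {C : Subgroup G} (h : Nat.card ↥C ≤ 1) : Nat.card ↥C = 1 :=
  le_antisymm h Nat.card_pos

lemma ccM_eq_alphaTerm (hcp : IsCPGroup G) {p : ℕ} (hp : p.Prime) {M : Subgroup G}
    (hMp : M ∈ maxCycP p G) : (ccM M : ℤ) = alphaTerm p M := by
  classical
  set A : Set (Set (Subgroup G)) := mcSet '' ((M : Set G) \ {1}) with hAdef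
  have hMdecomp : (M : Set G) = insert 1 ((M : Set G) \ {1}) := by
    rw [Set.insert_diff_singleton, Set.insert_eq_of_mem (M.one_mem)]
  have himg : mcSet '' (M : Set G) = insert (mcSet 1) A := by
    rw [hMdecomp, Set.image_insert_eq]
  have hA : Nat.card A = Nat.card (inters p M \ {⊥} : Set (Subgroup G)) := by
    rw [hAdef, card_image_eq_of_iff mcSet (theta p M) _
      (fun x hx y hy => mcSet_eq_iff_theta hcp hp hMp hx.1 (by simpa using hx.2)
        hy.1 (by simpa using hy.2)),
      theta_image hcp hp hMp]
  have hsnum : sNum p M = Nat.card (inters p M) := rfl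
  have hdiff_mem : (⊥ : Subgroup G) ∈ inters p M →
      (Nat.card (inters p M \ {⊥} : Set (Subgroup G)) : ℤ) = (sNum p M : ℤ) - 1 := by
    intro hb
    have h1 : ((inters p M \ {⊥}).ncard + 1 : ℕ) = (inters p M).ncard :=
      Set.ncard_diff_singleton_add_one hb (Set.toFinite _)
    rw [hsnum, Nat.card_coe_set_eq, Nat.card_coe_set_eq, ← h1]
    push_cast
    ring
  have hdiff_notmem : (⊥ : Subgroup G) ∉ inters p M →
      (Nat.card (inters p M \ {⊥} : Set (Subgroup G)) : ℤ) = (sNum p M : ℤ) := by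
    intro hb
    rw [Set.diff_singleton_eq_self hb, hsnum]
  by_cases hQ : {N : Subgroup G | IsMaxCyclic N ∧ ¬ IsPGroup p N}.Nonempty
  · -- there are maximal cyclic subgroups that are not p-groups
    have htriv : ∀ N : Subgroup G, IsMaxCyclic N → ¬ IsPGroup p ↥N →
        Nat.card ↥(M ⊓ N) = 1 := by
      intro N hN hNp
      rw [Subgroup.card_eq_one]
      by_contra hne
      have hNbot : N ≠ ⊥ := fun h => hNp (h ▸ IsPGroup.of_bot)
      obtain ⟨q, k', hq, hk', hcard⟩ := hN.exists_prime hcp hNbot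
      have hqgrp : IsPGroup q ↥N := IsPGroup.of_card hcard
      have hpq : p = q := prime_eq_of_pgroups hp hq (hMp.2.to_le inf_le_left)
        (hqgrp.to_le inf_le_right) hne
      exact hNp (by rw [hpq]; exact hqgrp)
    have hQset : {k | ∃ N : Subgroup G, IsMaxCyclic N ∧ ¬ IsPGroup p N ∧
        k = Nat.card ↥(M ⊓ N)} = {1} := by
      ext k
      simp only [Set.mem_setOf_eq, Set.mem_singleton_iff]
      constructor
      · rintro ⟨N, hN, hNp, rfl⟩
        exact htriv N hN hNp
      · rintro rfl
        obtain ⟨N, hN, hNp⟩ := hQ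
        exact ⟨N, hN, hNp, (htriv N hN hNp).symm⟩
    have hlam : lamInt p M = 0 := by
      unfold lamInt
      rw [if_pos hQ, hQset, csSup_singleton]
      simp [padicValNat.one]
    have hcount : Nat.card {C | C ∈ inters p M ∧
        (Nat.card ↥C : ℚ) ≤ (p : ℚ) ^ (lamInt p M)} =
        (if (⊥ : Subgroup G) ∈ inters p M then 1 else 0) := by
      have hset : {C | C ∈ inters p M ∧ (Nat.card ↥C : ℚ) ≤ (p : ℚ) ^ (lamInt p M)} =
          {C | C ∈ inters p M ∧ C = ⊥} := by
        ext C
        rw [hlam]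
        simp only [Set.mem_setOf_eq, zpow_zero, and_congr_right_iff]
        intro hC
        rw [show ((1 : ℚ)) = ((1 : ℕ) : ℚ) by norm_num, Nat.cast_le, ← Subgroup.card_eq_one]
        exact ⟨fun h => card_one_of_le_one h, fun h => h.le⟩
      rw [hset]
      by_cases hb : (⊥ : Subgroup G) ∈ inters p M
      · rw [if_pos hb]
        have : {C | C ∈ inters p M ∧ C = ⊥} = {⊥} := by
          ext C
          simp only [Set.mem_setOf_eq, Set.mem_singleton_iff]
          exact ⟨fun h => h.2, fun h => ⟨h ▸ hb, h⟩⟩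
        rw [this, Nat.card_coe_set_eq, Set.ncard_singleton]
      · rw [if_neg hb]
        have : {C | C ∈ inters p M ∧ C = ⊥} = ∅ := by
          ext C
          simp only [Set.mem_setOf_eq, Set.mem_empty_iff_false, iff_false, not_and]
          rintro h rfl
          exact hb h
        rw [this]
        simp
    have hone : mcSet (1 : G) ∉ A := by
      rintro ⟨x, ⟨hxM, hx1'⟩, hxeq⟩
      have hx1 : x ≠ 1 := by simpa using hx1'
      obtain ⟨N0, hN0, hN0p⟩ := hQ
      have hmem : N0 ∈ mcSet x := by rw [hxeq, mcSet_one']; exact hN0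
      rw [mcSet_eq_filter hcp hp hMp hxM hx1] at hmem
      exact hN0p hmem.1.2
    have hcardM : (ccM M : ℤ) = (Nat.card (inters p M \ {⊥} : Set (Subgroup G)) : ℤ) + 1 := by
      have h1 : Nat.card (mcSet '' (M : Set G)) = Nat.card A + 1 := by
        rw [himg, Nat.card_coe_set_eq,
          Set.ncard_insert_of_notMem hone (Set.toFinite _), ← Nat.card_coe_set_eq]
      show ((Nat.card (mcSet '' (M : Set G)) : ℕ) : ℤ) = _
      rw [h1, hA]
      push_cast
      ring
    rw [hcardM]
    unfold alphaTerm sPrimeNum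
    rw [hcount, hlam]
    by_cases hb : (⊥ : Subgroup G) ∈ inters p M
    · rw [if_pos hb, hdiff_mem hb]
      push_cast
      ring
    · rw [if_neg hb, hdiff_notmem hb]
      push_cast
      ring
  · -- all maximal cyclic subgroups are p-groups
    have hallp : ∀ N : Subgroup G, IsMaxCyclic N → IsPGroup p ↥N := by
      intro N hN
      by_contra h
      exact hQ ⟨N, hN, h⟩
    have hlam : lamInt p M = -1 := by
      unfold lamInt
      rw [if_neg hQ]
    have hcount0 : {C | C ∈ inters p M ∧
        (Nat.card ↥C : ℚ) ≤ (p : ℚ) ^ (lamInt p M)} = ∅ := by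
      ext C
      simp only [Set.mem_setOf_eq, Set.mem_empty_iff_false, iff_false, not_and]
      intro hCI hle
      rw [hlam] at hle
      have h1 : (1 : ℚ) ≤ (Nat.card ↥C : ℚ) := by
        exact_mod_cast Nat.one_le_iff_ne_zero.mpr Nat.card_pos.ne'
      have hp1 : (1 : ℚ) < (p : ℚ) := by exact_mod_cast hp.one_lt
      have h2 : (p : ℚ) ^ (-1 : ℤ) < 1 := by
        rw [zpow_neg_one]
        exact inv_lt_one_of_one_lt₀ hp1
      linarith
    have hsprime : sPrimeNum p M = 1 := by
      unfold sPrimeNum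
      rw [hcount0]
      simp
    by_cases hb : (⊥ : Subgroup G) ∈ inters p M
    · have hone : mcSet (1 : G) ∉ A := by
        rintro ⟨x, ⟨hxM, hx1'⟩, hxeq⟩
        have hx1 : x ≠ 1 := by simpa using hx1'
        obtain ⟨Nb, hNb, hNbeq⟩ := hb
        have hmem : Nb ∈ mcSet x := by rw [hxeq, mcSet_one']; exact hNb.1
        obtain ⟨hθI, hθx, hθmin⟩ := theta_spec hcp hMp hxM
        rw [mcSet_eq_filter hcp hp hMp hxM hx1] at hmem
        have hle : theta p M x ≤ ⊥ := by rw [hNbeq]; exact hmem.2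
        exact hx1 (Subgroup.mem_bot.mp (hle hθx))
      have hcardM : (ccM M : ℤ) =
          (Nat.card (inters p M \ {⊥} : Set (Subgroup G)) : ℤ) + 1 := by
        have h1 : Nat.card (mcSet '' (M : Set G)) = Nat.card A + 1 := by
          rw [himg, Nat.card_coe_set_eq,
            Set.ncard_insert_of_notMem hone (Set.toFinite _), ← Nat.card_coe_set_eq]
        show ((Nat.card (mcSet '' (M : Set G)) : ℕ) : ℤ) = _
        rw [h1, hA]
        push_cast
        ring
      rw [hcardM]
      unfold alphaTerm
      rw [hlam, hsprime, hdiff_mem hb]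
      push_cast
      ring
    · -- the bottom of the chain is nontrivial
      have hSfin : (inters p M).Finite := Set.toFinite _
      obtain ⟨C0, hC0I, hC0min⟩ := hSfin.exists_minimal_wrt id _ ⟨M, self_mem_inters hMp⟩
      have hleast : ∀ D ∈ inters p M, C0 ≤ D := by
        intro D hD
        rcases inters_chain hcp hMp.1 hC0I hD with h | h
        · exact h
        · exact (hC0min D hD h).le
      have hC0bot : C0 ≠ ⊥ := fun h => hb (h ▸ hC0I)
      obtain ⟨g, hgC0, hgen⟩ := exists_gen_of_cyclic (isCyclic_of_le hMp.1.1 (inters_le hC0I))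
      have hg1 : g ≠ 1 := fun h => hC0bot (hgen.trans (zpowers_eq_bot.mpr h))
      have hgM : g ∈ M := inters_le hC0I hgC0
      have hone : mcSet (1 : G) ∈ A := by
        refine ⟨g, ⟨hgM, by simpa using hg1⟩, ?_⟩
        rw [mcSet_eq_filter hcp hp hMp hgM hg1, mcSet_one']
        obtain ⟨hθI, hθg, hθmin⟩ := theta_spec hcp hMp hgM
        ext N
        simp only [Set.mem_setOf_eq]
        constructor
        · rintro ⟨hNp, -⟩
          exact hNp.1
        · intro hN
          have hNp : N ∈ maxCycP p G := ⟨hN, hallp N hN⟩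
          exact ⟨hNp, (hθmin C0 hC0I hgC0).trans (hleast (M ⊓ N) ⟨N, hNp, rfl⟩)⟩
      have hcardM : (ccM M : ℤ) = (Nat.card (inters p M \ {⊥} : Set (Subgroup G)) : ℤ) := by
        have h1 : Nat.card (mcSet '' (M : Set G)) = Nat.card A := by
          rw [himg, Set.insert_eq_of_mem hone]
        show ((Nat.card (mcSet '' (M : Set G)) : ℕ) : ℤ) = _
        rw [h1, hA]
      rw [hcardM]
      unfold alphaTerm
      rw [hlam, hsprime, hdiff_notmem hb]
      push_cast
      ring

end AuxE


section AuxF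
variable {G : Type*} [Group G] [Finite G]
set_option linter.unusedSectionVars false
set_option linter.unusedVariables false

lemma mem_maxCycP_of_maxCyclic (hcp : IsCPGroup G) {M : Subgroup G} (hM : IsMaxCyclic M)
    (hb : M ≠ ⊥) : ∃ p : ℕ, p.Prime ∧ M ∈ maxCycP p G ∧ p ∣ Nat.card G := by
  obtain ⟨p, k, hp, hk, hcard⟩ := hM.exists_prime hcp hb
  refine ⟨p, hp, ⟨hM, IsPGroup.of_card hcard⟩, ?_⟩
  have h1 : p ∣ Nat.card ↥M := by
    rw [hcard]
    exact dvd_pow_self p hk.ne'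
  exact h1.trans (Subgroup.card_subgroup_dvd_card M)

lemma maxCycP_nonempty (hcp : IsCPGroup G) {p : ℕ} (hp : p.Prime)
    (hpd : p ∣ Nat.card G) : (maxCycP p G).Nonempty := by
  haveI : Fact p.Prime := ⟨hp⟩
  obtain ⟨x, hx⟩ := exists_prime_orderOf_dvd_card' p hpd
  have hx1 : x ≠ 1 := by
    intro h
    rw [h, orderOf_one] at hx
    exact hp.one_lt.ne hx
  obtain ⟨M, hM, hxM⟩ := exists_maxCyclic_mem x
  have hMbot : M ≠ ⊥ := by
    intro h
    rw [h] at hxM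
    exact hx1 (Subgroup.mem_bot.mp hxM)
  obtain ⟨q, k, hq, hk, hcard⟩ := hM.exists_prime hcp hMbot
  have hqgrp : IsPGroup q ↥M := IsPGroup.of_card hcard
  have hZp : IsPGroup p ↥(zpowers x) := IsPGroup.of_card (n := 1) (by
    rw [Nat.card_zpowers, hx, pow_one])
  have hZbot : zpowers x ≠ ⊥ := fun h => hx1 (zpowers_eq_bot.mp h)
  have hpq : p = q := prime_eq_of_pgroups hp hq hZp (hqgrp.to_le (zpowers_le.mpr hxM)) hZbot
  exact ⟨M, hM, by rw [hpq]; exact hqgrp⟩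

end AuxF


theorem stmt_9 {G : Type*} [Group G] [Finite G] (hnc : ¬ IsCyclic G)
    (hcp : IsCPGroup G) :
    ((powerGraph G).reduced.cliqueNum : ℤ) =
      sSup ((fun p => alphaP p G) '' {p : ℕ | p.Prime ∧ p ∣ Nat.card G}) := by
  classical
  haveI : Nontrivial G := Nontrivial.of_not_isCyclic hnc
  obtain ⟨M0, hM0, hcl, hmax⟩ := cliqueNum_spec hcp
  have hM0bot : M0 ≠ ⊥ := hM0.ne_bot
  obtain ⟨p0, hp0, hM0p, hp0dvd⟩ := mem_maxCycP_of_maxCyclic hcp hM0 hM0bot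
  have key : ∀ p : ℕ, p.Prime → p ∣ Nat.card G →
      ∀ z ∈ alphaTerm p '' maxCycP p G, z ≤ (ccM M0 : ℤ) := by
    rintro p hp hpd z ⟨M, hMp, rfl⟩
    rw [← ccM_eq_alphaTerm hcp hp hMp]
    exact_mod_cast hmax M hMp.1
  have halpha_le : ∀ p : ℕ, p.Prime → p ∣ Nat.card G → alphaP p G ≤ (ccM M0 : ℤ) := by
    intro p hp hpd
    obtain ⟨M, hMne⟩ := maxCycP_nonempty hcp hp hpd
    exact csSup_le ⟨alphaTerm p M, ⟨M, hMne, rfl⟩⟩ (key p hp hpd)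
  have halpha0 : alphaP p0 G = (ccM M0 : ℤ) := by
    apply le_antisymm (halpha_le p0 hp0 hp0dvd)
    have hmem : (ccM M0 : ℤ) ∈ alphaTerm p0 '' maxCycP p0 G :=
      ⟨M0, hM0p, (ccM_eq_alphaTerm hcp hp0 hM0p).symm⟩
    exact le_csSup ⟨(ccM M0 : ℤ), key p0 hp0 hp0dvd⟩ hmem
  rw [hcl]
  apply le_antisymm
  · apply le_csSup
    · refine ⟨(ccM M0 : ℤ), ?_⟩
      rintro z ⟨p, ⟨hp, hpd⟩, rfl⟩
      exact halpha_le p hp hpd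
    · exact ⟨p0, ⟨hp0, hp0dvd⟩, halpha0⟩
  · apply csSup_le
    · exact ⟨alphaP p0 G, ⟨p0, ⟨hp0, hp0dvd⟩, rfl⟩⟩
    · rintro z ⟨p, ⟨hp, hpd⟩, rfl⟩
      exact halpha_le p hp hpd
end
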